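/- arXiv:1406.5084 — 2 statements merged into one kernel-verified Lean document; each statement's English description precedes it below -/
import Mathlib

section
/- The number of break divisors on a connected graph G equals the number of spanning trees of G. -/
/-- A finite multigraph: vertices, edges, and an (arbitrarily oriented)
pair of endpoints for each edge. -/
structure Multigraph where
  V : Type
  E : Type
  [fV : Fintype V]
  [fE : Fintype E]
  [dV : DecidableEq V]
  [dE : DecidableEq E]
  ends : E → V × V

attribute [instance] Multigraph.fV Multigraph.fE Multigraph.dV Multigraph.dE

namespace Multigraph

variable (G : Multigraph)

/-- No loop edges. -/
def Loopless : Prop := ∀ e : G.E, (G.ends e).1 ≠ (G.ends e).2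

/-- Adjacency via some edge. -/
def Adj (x y : G.V) : Prop := ∃ e : G.E, G.ends e = (x, y) ∨ G.ends e = (y, x)

/-- The multigraph is connected. -/
def Connected : Prop := Nonempty G.V ∧ ∀ x y : G.V, Relation.ReflTransGen G.Adj x y

/-- The degree of a divisor (a divisor is a function `V → ℤ`). -/
def deg (D : G.V → ℤ) : ℤ := ∑ v, D v

/-- The Laplacian divisor `Δ f` of `f : V → ℤ`. -/
def lap (f : G.V → ℤ) : G.V → ℤ := fun v =>
  ∑ e : G.E, ((if (G.ends e).1 = v then f v - f (G.ends e).2 else 0) +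
              (if (G.ends e).2 = v then f v - f (G.ends e).1 else 0))

/-- Linear equivalence of divisors. -/
def LinEquiv (D D' : G.V → ℤ) : Prop := ∃ f : G.V → ℤ, D - D' = G.lap f

/-- `x` and `y` are connected using only edges from `S`. -/
def ConnectsVia (S : Finset G.E) (x y : G.V) : Prop :=
  Relation.ReflTransGen
    (fun a b => ∃ e ∈ S, G.ends e = (a, b) ∨ G.ends e = (b, a)) x y

/-- A spanning tree, as an edge set: it connects all vertices and has
`#V - 1` edges. -/
def IsSpanningTree (T : Finset G.E) : Prop :=
  (∀ x y : G.V, G.ConnectsVia T x y) ∧ T.card + 1 = Fintype.card G.V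

/-- `D` is a `T`-break divisor: one chip on an endpoint of each edge outside `T`. -/
def IsTBreak (T : Finset G.E) (D : G.V → ℤ) : Prop :=
  ∃ ch : G.E → G.V,
    (∀ e ∉ T, ch e = (G.ends e).1 ∨ ch e = (G.ends e).2) ∧
    ∀ v, D v = ((Finset.univ.filter (fun e => e ∉ T ∧ ch e = v)).card : ℤ)

/-- `D` is a break divisor. -/
def IsBreak (D : G.V → ℤ) : Prop := ∃ T, G.IsSpanningTree T ∧ G.IsTBreak T D

/-- The genus `#E - #V + 1`. -/
def genus : ℤ := (Fintype.card G.E : ℤ) - Fintype.card G.V + 1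

end Multigraph

namespace Multigraph

open Finset

variable (G : Multigraph)

/-! ### Relative notions: everything relative to an allowed edge set `R`. -/

/-- number of edges of `R` with both endpoints in `A` -/
def mEdges (R : Finset G.E) (A : Finset G.V) : ℕ :=
  (R.filter (fun f => (G.ends f).1 ∈ A ∧ (G.ends f).2 ∈ A)).card

def TreeR (R T : Finset G.E) : Prop :=
  T ⊆ R ∧ (∀ x y : G.V, G.ConnectsVia T x y) ∧ T.card + 1 = Fintype.card G.V

def BreakR (R : Finset G.E) (D : G.V → ℤ) : Prop :=
  ∃ T, G.TreeR R T ∧ ∃ ch : G.E → G.V,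
    (∀ e ∈ R, e ∉ T → ch e = (G.ends e).1 ∨ ch e = (G.ends e).2) ∧
    ∀ v, D v = ((R.filter (fun e => e ∉ T ∧ ch e = v)).card : ℤ)

def ConnR (R : Finset G.E) : Prop := ∀ x y : G.V, G.ConnectsVia R x y

def ConstrR (R : Finset G.E) (D : G.V → ℤ) : Prop :=
  (∀ v, 0 ≤ D v) ∧ (∑ v, D v) = (R.card : ℤ) - Fintype.card G.V + 1 ∧
  ∀ A : Finset G.V, A.Nonempty → (G.mEdges R A : ℤ) - A.card + 1 ≤ ∑ x ∈ A, D x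

variable {G}

/-! ### Basic ConnectsVia lemmas -/

lemma ConnectsVia.mono {S S' : Finset G.E} (h : S ⊆ S') {x y : G.V}
    (hxy : G.ConnectsVia S x y) : G.ConnectsVia S' x y := by
  refine Relation.ReflTransGen.mono ?_ _ _ hxy
  rintro a b ⟨e, he, hab⟩
  exact ⟨e, h he, hab⟩

lemma ConnectsVia.symm {S : Finset G.E} {x y : G.V}
    (hxy : G.ConnectsVia S x y) : G.ConnectsVia S y x := by
  have hsymm : Symmetric (fun a b => ∃ e ∈ S, G.ends e = (a, b) ∨ G.ends e = (b, a)) := by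
    rintro a b ⟨e, he, hab⟩; exact ⟨e, he, hab.symm⟩
  exact (@Relation.ReflTransGen.stdSymm _ _ ⟨hsymm⟩).symm _ _ hxy

lemma ConnectsVia.trans {S : Finset G.E} {x y z : G.V}
    (hxy : G.ConnectsVia S x y) (hyz : G.ConnectsVia S y z) : G.ConnectsVia S x z :=
  Relation.ReflTransGen.trans hxy hyz

lemma connR_univ (hG : G.Connected) : G.ConnR Finset.univ := by
  intro x y
  refine Relation.ReflTransGen.mono ?_ _ _ (hG.2 x y)
  rintro a b ⟨e, hab⟩
  exact ⟨e, Finset.mem_univ e, hab⟩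

/-- removing a loop keeps connectivity -/
lemma ConnectsVia.erase_loop {S : Finset G.E} {l : G.E}
    (hloop : (G.ends l).1 = (G.ends l).2) {x y : G.V}
    (hxy : G.ConnectsVia S x y) : G.ConnectsVia (S.erase l) x y := by
  induction hxy with
  | refl => exact Relation.ReflTransGen.refl
  | @tail b c _ hstep ih =>
    obtain ⟨e, he, hab⟩ := hstep
    by_cases heq : e = l
    · subst heq
      have hbc : b = c := by
        rcases hab with h | h
        · rw [h] at hloop; exact hloop
        · rw [h] at hloop; exact hloop.symm
      exact hbc ▸ ih
    · exact ih.tail ⟨e, Finset.mem_erase.mpr ⟨heq, he⟩, hab⟩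

end Multigraph
namespace Multigraph

open Finset

variable {G : Multigraph}

/-! ### Contraction -/

section Contract

variable (G) in
/-- projection of vertices under contraction of `e` -/
def cproj (e : G.E) (huv : (G.ends e).1 ≠ (G.ends e).2) (x : G.V) :
    {z : G.V // z ≠ (G.ends e).2} :=
  if h : x = (G.ends e).2 then ⟨(G.ends e).1, huv⟩ else ⟨x, h⟩

variable (G) in
/-- contraction of the edge `e` -/
@[reducible] def contract (e : G.E) (huv : (G.ends e).1 ≠ (G.ends e).2) : Multigraph where
  V := {z : G.V // z ≠ (G.ends e).2}
  E := {f : G.E // f ≠ e}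
  ends f := (G.cproj e huv (G.ends f.1).1, G.cproj e huv (G.ends f.1).2)

variable {e : G.E} {huv : (G.ends e).1 ≠ (G.ends e).2}

variable (G e huv) in
def ubar : (G.contract e huv).V := ⟨(G.ends e).1, huv⟩

lemma cproj_eq_of_ne {x : G.V} (h : x ≠ (G.ends e).2) : G.cproj e huv x = ⟨x, h⟩ :=
  dif_neg h

@[simp] lemma cproj_snd : G.cproj e huv (G.ends e).2 = ubar G e huv := dif_pos rfl

@[simp] lemma cproj_fst : G.cproj e huv (G.ends e).1 = ubar G e huv := dif_neg huv

@[simp] lemma cproj_val (xb : (G.contract e huv).V) : G.cproj e huv xb.val = xb := by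
  rw [cproj_eq_of_ne xb.2]

lemma cproj_cases (x : G.V) :
    (G.cproj e huv x).val = x ∨ (x = (G.ends e).2 ∧ G.cproj e huv x = ubar G e huv) := by
  by_cases h : x = (G.ends e).2
  · exact Or.inr ⟨h, by rw [h, cproj_snd]⟩
  · exact Or.inl (by rw [cproj_eq_of_ne h])

lemma contract_ends (fb : (G.contract e huv).E) :
    (G.contract e huv).ends fb =
      (G.cproj e huv (G.ends fb.val).1, G.cproj e huv (G.ends fb.val).2) := rfl

@[simp] lemma card_contract_V :
    Fintype.card (G.contract e huv).V + 1 = Fintype.card G.V := by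
  have : Fintype.card {z : G.V // z ≠ (G.ends e).2} + 1 = Fintype.card G.V := by
    rw [Fintype.card_subtype_compl, Fintype.card_subtype_eq]
    have : 1 ≤ Fintype.card G.V := Fintype.card_pos_iff.mpr ⟨(G.ends e).2⟩
    omega
  exact this

@[simp] lemma card_contract_E :
    Fintype.card (G.contract e huv).E + 1 = Fintype.card G.E := by
  have : Fintype.card {f : G.E // f ≠ e} + 1 = Fintype.card G.E := by
    rw [Fintype.card_subtype_compl, Fintype.card_subtype_eq]
    have : 1 ≤ Fintype.card G.E := Fintype.card_pos_iff.mpr ⟨e⟩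
    omega
  exact this

/-- vertices with equal projections are connected through `e` -/
lemma connectsVia_of_cproj_eq {S : Finset G.E} (heS : e ∈ S) {x y : G.V}
    (h : G.cproj e huv x = G.cproj e huv y) : G.ConnectsVia S x y := by
  have hstep : ∀ a b : G.V, a = (G.ends e).1 → b = (G.ends e).2 → G.ConnectsVia S a b := by
    intro a b ha hb
    refine Relation.ReflTransGen.single ⟨e, heS, Or.inl ?_⟩
    rw [ha, hb]
  rcases cproj_cases (huv := huv) x with hx | ⟨hx, hx'⟩ <;>
    rcases cproj_cases (huv := huv) y with hy | ⟨hy, hy'⟩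
  · have : x = y := by rw [← hx, ← hy, h]
    rw [this]
    exact Relation.ReflTransGen.refl
  · have hxu : x = (G.ends e).1 := by rw [← hx, h, hy']; rfl
    exact hstep x y hxu hy
  · have hyu : y = (G.ends e).1 := by rw [← hy, ← h, hx']; rfl
    exact (hstep y x hyu hx).symm
  · rw [hx, hy]
    exact Relation.ReflTransGen.refl

lemma ConnectsVia.contract_push {S : Finset G.E} {x y : G.V} (h : G.ConnectsVia S x y) :
    (G.contract e huv).ConnectsVia (S.subtype (· ≠ e))
      (G.cproj e huv x) (G.cproj e huv y) := by
  induction h with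
  | refl => exact Relation.ReflTransGen.refl
  | @tail b c _ hstep ih =>
    obtain ⟨f, hf, hbc⟩ := hstep
    by_cases hfe : f = e
    · rw [hfe] at hbc
      have hbc' : G.cproj e huv b = G.cproj e huv c := by
        rcases hbc with h' | h'
        · have h1 : b = (G.ends e).1 := by rw [h']
          have h2 : c = (G.ends e).2 := by rw [h']
          rw [h1, h2, cproj_fst, cproj_snd]
        · have h1 : c = (G.ends e).1 := by rw [h']
          have h2 : b = (G.ends e).2 := by rw [h']
          rw [h1, h2, cproj_fst, cproj_snd]
      exact hbc' ▸ ih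
    · refine ih.tail ⟨⟨f, hfe⟩, Finset.mem_subtype.mpr hf, ?_⟩
      rcases hbc with h' | h'
      · left; rw [contract_ends, h']
      · right; rw [contract_ends, h']

lemma connectsVia_contract_lift {Sb : Finset (G.contract e huv).E}
    {xb yb : (G.contract e huv).V}
    (h : (G.contract e huv).ConnectsVia Sb xb yb) :
    ∀ x y : G.V, G.cproj e huv x = xb → G.cproj e huv y = yb →
      G.ConnectsVia (insert e (Sb.map (Function.Embedding.subtype _))) x y := by
  induction h with
  | refl =>
    intro x y hx hy
    exact connectsVia_of_cproj_eq (Finset.mem_insert_self e _) (hx.trans hy.symm)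
  | @tail bb cc _ hstep ih =>
    intro x y hx hy
    obtain ⟨fb, hfb, hbc⟩ := hstep
    have hmem : fb.val ∈ insert e (Sb.map (Function.Embedding.subtype _)) :=
      Finset.mem_insert_of_mem (Finset.mem_map_of_mem _ hfb)
    have hstep1 : G.ConnectsVia (insert e (Sb.map (Function.Embedding.subtype _)))
        (G.ends fb.val).1 (G.ends fb.val).2 :=
      Relation.ReflTransGen.single ⟨fb.val, hmem, Or.inl rfl⟩
    rcases hbc with h' | h'
    · rw [contract_ends] at h'
      have h1 : G.cproj e huv (G.ends fb.val).1 = bb := congrArg Prod.fst h'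
      have h2 : G.cproj e huv (G.ends fb.val).2 = cc := congrArg Prod.snd h'
      exact ((ih x (G.ends fb.val).1 hx h1).trans hstep1).trans
        (connectsVia_of_cproj_eq (Finset.mem_insert_self e _) (h2.trans hy.symm))
    · rw [contract_ends] at h'
      have h1 : G.cproj e huv (G.ends fb.val).1 = cc := congrArg Prod.fst h'
      have h2 : G.cproj e huv (G.ends fb.val).2 = bb := congrArg Prod.snd h'
      exact ((ih x (G.ends fb.val).2 hx h2).trans hstep1.symm).trans
        (connectsVia_of_cproj_eq (Finset.mem_insert_self e _) (h1.trans hy.symm))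

lemma ConnR.contract_push {R : Finset G.E} (h : G.ConnR R) :
    (G.contract e huv).ConnR (R.subtype (· ≠ e)) := by
  intro xb yb
  have := (h xb.val yb.val).contract_push (e := e) (huv := huv)
  rwa [cproj_val, cproj_val] at this

end Contract

end Multigraph
namespace Multigraph

open Finset

lemma card_subtype_filter {α : Type*} (R : Finset α) (p : α → Prop) [DecidablePred p]
    (q : α → Prop) [DecidablePred q] :
    ((R.subtype p).filter (fun x => q x.val)).card = (R.filter (fun a => p a ∧ q a)).card := by
  refine Finset.card_bij (fun x _ => x.val) ?_ ?_ ?_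
  · intro x hx
    rw [Finset.mem_filter] at hx ⊢
    rw [Finset.mem_subtype] at hx
    exact ⟨hx.1, x.2, hx.2⟩
  · intro x _ y _ h
    exact Subtype.ext h
  · intro a ha
    rw [Finset.mem_filter] at ha
    refine ⟨⟨a, ha.2.1⟩, ?_, rfl⟩
    rw [Finset.mem_filter, Finset.mem_subtype]
    exact ⟨ha.1, ha.2.2⟩

lemma filter_card_eq_add {α : Type*} [DecidableEq α] (R : Finset α) (e : α) (he : e ∈ R)
    (q : α → Prop) [DecidablePred q] :
    (R.filter q).card = (R.filter (fun a => a ≠ e ∧ q a)).card + (if q e then 1 else 0) := by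
  have hsplit : R.filter q = (R.filter (fun a => a ≠ e ∧ q a)) ∪ (if q e then {e} else ∅) := by
    ext a
    by_cases hae : a = e
    · subst hae
      by_cases hq : q a <;> simp [Finset.mem_filter, Finset.mem_union, hq, he]
    · by_cases hq : q e <;> simp [Finset.mem_filter, Finset.mem_union, hae, hq]
  rw [hsplit, Finset.card_union_of_disjoint]
  · congr 1
    by_cases hq : q e <;> simp [hq]
  · refine Finset.disjoint_left.mpr ?_
    intro a ha ha'
    rw [Finset.mem_filter] at ha
    by_cases hq : q e
    · rw [if_pos hq, Finset.mem_singleton] at ha'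
      exact ha.2.1 ha'
    · rw [if_neg hq] at ha'
      exact absurd ha' (Finset.notMem_empty a)

section Contract2

variable {G : Multigraph} {e : G.E} {huv : (G.ends e).1 ≠ (G.ends e).2}

variable (G e huv) in
def liftA (Ab : Finset (G.contract e huv).V) : Finset G.V :=
  Ab.map (Function.Embedding.subtype _) ∪ (if ubar G e huv ∈ Ab then {(G.ends e).2} else ∅)

lemma mem_liftA {Ab : Finset (G.contract e huv).V} {x : G.V} :
    x ∈ liftA G e huv Ab ↔ G.cproj e huv x ∈ Ab := by
  unfold liftA
  rw [Finset.mem_union, Finset.mem_map]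
  by_cases hx : x = (G.ends e).2
  · subst hx
    rw [cproj_snd]
    constructor
    · rintro (⟨xb, _, hval⟩ | hmem)
      · exact absurd hval xb.2
      · by_cases hu : ubar G e huv ∈ Ab
        · exact hu
        · rw [if_neg hu] at hmem; exact absurd hmem (Finset.notMem_empty _)
    · intro hu
      right; rw [if_pos hu]; exact Finset.mem_singleton_self _
  · rw [cproj_eq_of_ne hx]
    constructor
    · rintro (⟨xb, hxb, hval⟩ | hmem)
      · have : xb = ⟨x, hx⟩ := Subtype.ext hval
        rwa [← this]
      · exfalso
        by_cases hu : ubar G e huv ∈ Ab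
        · rw [if_pos hu, Finset.mem_singleton] at hmem; exact hx hmem
        · rw [if_neg hu] at hmem; exact Finset.notMem_empty _ hmem
    · intro h
      exact Or.inl ⟨⟨x, hx⟩, h, rfl⟩

lemma liftA_disj {Ab : Finset (G.contract e huv).V} :
    Disjoint (Ab.map (Function.Embedding.subtype _))
      (if ubar G e huv ∈ Ab then ({(G.ends e).2} : Finset G.V) else ∅) := by
  refine Finset.disjoint_left.mpr ?_
  intro a ha ha'
  rw [Finset.mem_map] at ha
  obtain ⟨xb, _, hval⟩ := ha
  by_cases hu : ubar G e huv ∈ Ab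
  · rw [if_pos hu, Finset.mem_singleton] at ha'
    subst ha'
    exact xb.2 hval
  · rw [if_neg hu] at ha'; exact Finset.notMem_empty _ ha'

lemma card_liftA (Ab : Finset (G.contract e huv).V) :
    (liftA G e huv Ab).card = Ab.card + (if ubar G e huv ∈ Ab then 1 else 0) := by
  unfold liftA
  rw [Finset.card_union_of_disjoint liftA_disj, Finset.card_map]
  congr 1
  by_cases hu : ubar G e huv ∈ Ab <;> simp [hu]

lemma liftA_nonempty {Ab : Finset (G.contract e huv).V} (h : Ab.Nonempty) :
    (liftA G e huv Ab).Nonempty := by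
  obtain ⟨xb, hxb⟩ := h
  exact ⟨xb.val, mem_liftA.mpr (by rwa [cproj_val])⟩

variable (G e huv) in
def pushD (D : G.V → ℤ) : (G.contract e huv).V → ℤ :=
  fun xb => D xb.val + (if xb = ubar G e huv then D (G.ends e).2 else 0)

lemma sum_liftA (Ab : Finset (G.contract e huv).V) (D : G.V → ℤ) :
    ∑ x ∈ liftA G e huv Ab, D x = ∑ xb ∈ Ab, pushD G e huv D xb := by
  unfold liftA pushD
  rw [Finset.sum_union liftA_disj, Finset.sum_map, Finset.sum_add_distrib]
  congr 1
  rw [Finset.sum_ite_eq' Ab (ubar G e huv) (fun _ => D (G.ends e).2)]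
  by_cases hu : ubar G e huv ∈ Ab <;> simp [hu]

lemma liftA_univ : liftA G e huv Finset.univ = Finset.univ := by
  ext x
  simp [mem_liftA]

lemma sum_pushD_univ (D : G.V → ℤ) :
    ∑ xb, pushD G e huv D xb = ∑ x, D x := by
  rw [← sum_liftA Finset.univ D, liftA_univ]

lemma mEdges_contract {R : Finset G.E} (hR : e ∈ R) (Ab : Finset (G.contract e huv).V) :
    (G.contract e huv).mEdges (R.subtype (· ≠ e)) Ab + (if ubar G e huv ∈ Ab then 1 else 0)
      = G.mEdges R (liftA G e huv Ab) := by
  unfold mEdges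
  have h1 : ((R.subtype (· ≠ e)).filter
      (fun fb => ((G.contract e huv).ends fb).1 ∈ Ab ∧ ((G.contract e huv).ends fb).2 ∈ Ab)).card
      = (R.filter (fun a => a ≠ e ∧
          (G.cproj e huv (G.ends a).1 ∈ Ab ∧ G.cproj e huv (G.ends a).2 ∈ Ab))).card := by
    exact card_subtype_filter R (· ≠ e)
      (fun a => G.cproj e huv (G.ends a).1 ∈ Ab ∧ G.cproj e huv (G.ends a).2 ∈ Ab)
  have h2 : R.filter (fun f => (G.ends f).1 ∈ liftA G e huv Ab ∧ (G.ends f).2 ∈ liftA G e huv Ab)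
      = R.filter (fun a => G.cproj e huv (G.ends a).1 ∈ Ab ∧ G.cproj e huv (G.ends a).2 ∈ Ab) := by
    apply Finset.filter_congr
    intro a _
    rw [mem_liftA, mem_liftA]
  rw [h1, h2, filter_card_eq_add R e hR
    (fun a => G.cproj e huv (G.ends a).1 ∈ Ab ∧ G.cproj e huv (G.ends a).2 ∈ Ab)]
  congr 1
  rw [cproj_fst, cproj_snd]
  by_cases hu : ubar G e huv ∈ Ab <;> simp [hu]

lemma mEdges_le_contract {R : Finset G.E} (hR : e ∈ R) (A : Finset G.V) :
    G.mEdges R A ≤ (G.contract e huv).mEdges (R.subtype (· ≠ e)) (A.image (G.cproj e huv))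
      + (if (G.ends e).1 ∈ A ∧ (G.ends e).2 ∈ A then 1 else 0) := by
  unfold mEdges
  rw [filter_card_eq_add R e hR (fun a => (G.ends a).1 ∈ A ∧ (G.ends a).2 ∈ A)]
  have h1 : ((R.subtype (· ≠ e)).filter
      (fun fb => ((G.contract e huv).ends fb).1 ∈ A.image (G.cproj e huv) ∧
        ((G.contract e huv).ends fb).2 ∈ A.image (G.cproj e huv))).card
      = (R.filter (fun a => a ≠ e ∧
          (G.cproj e huv (G.ends a).1 ∈ A.image (G.cproj e huv) ∧
           G.cproj e huv (G.ends a).2 ∈ A.image (G.cproj e huv)))).card := by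
    exact card_subtype_filter R (· ≠ e)
      (fun a => G.cproj e huv (G.ends a).1 ∈ A.image (G.cproj e huv) ∧
        G.cproj e huv (G.ends a).2 ∈ A.image (G.cproj e huv))
  rw [h1]
  gcongr ?_ + ?_
  · apply Finset.card_le_card
    intro a ha
    rw [Finset.mem_filter] at ha ⊢
    exact ⟨ha.1, ha.2.1, Finset.mem_image_of_mem _ ha.2.2.1, Finset.mem_image_of_mem _ ha.2.2.2⟩
  · split_ifs with h' <;> simp

lemma card_image_cproj_lt {A : Finset G.V} (h1 : (G.ends e).1 ∈ A) (h2 : (G.ends e).2 ∈ A) :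
    (A.image (G.cproj e huv)).card + 1 ≤ A.card := by
  have himg : A.image (G.cproj e huv) = (A.erase (G.ends e).2).image (G.cproj e huv) := by
    ext xb
    simp only [Finset.mem_image]
    constructor
    · rintro ⟨x, hx, rfl⟩
      by_cases hxv : x = (G.ends e).2
      · refine ⟨(G.ends e).1, Finset.mem_erase.mpr ⟨huv, h1⟩, ?_⟩
        rw [hxv, cproj_snd, cproj_fst]
      · exact ⟨x, Finset.mem_erase.mpr ⟨hxv, hx⟩, rfl⟩
    · rintro ⟨x, hx, rfl⟩
      exact ⟨x, Finset.mem_of_mem_erase hx, rfl⟩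
  rw [himg]
  have := Finset.card_image_le (s := A.erase (G.ends e).2) (f := G.cproj e huv)
  have hc : (A.erase (G.ends e).2).card + 1 = A.card := by
    rw [Finset.card_erase_of_mem h2]
    have : 1 ≤ A.card := Finset.card_pos.mpr ⟨_, h2⟩
    omega
  omega

lemma card_subtype_ne {R : Finset G.E} (hR : e ∈ R) :
    (R.subtype (· ≠ e)).card + 1 = R.card := by
  rw [Finset.card_subtype, Finset.filter_ne', Finset.card_erase_of_mem hR]
  have : 1 ≤ R.card := Finset.card_pos.mpr ⟨_, hR⟩
  omega

end Contract2

end Multigraph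
namespace Multigraph

open Finset

variable {G : Multigraph}

/-! ### Witness surgery lemmas -/

/-- Adding a chip on an endpoint of an extra allowed edge. -/
lemma BreakR.add_chip {R : Finset G.E} {e : G.E} (heR : e ∈ R) {D : G.V → ℤ} {x : G.V}
    (hx : x = (G.ends e).1 ∨ x = (G.ends e).2)
    (h : G.BreakR (R.erase e) D) :
    G.BreakR R (fun w => D w + if w = x then 1 else 0) := by
  obtain ⟨T, ⟨hTsub, hTconn, hTcard⟩, ch, hch, hcount⟩ := h
  have heT : e ∉ T := fun hin => (Finset.mem_erase.mp (hTsub hin)).1 rfl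
  refine ⟨T, ⟨hTsub.trans (Finset.erase_subset _ _), hTconn, hTcard⟩,
    Function.update ch e x, ?_, ?_⟩
  · intro f hfR hfT
    by_cases hfe : f = e
    · subst hfe
      rw [Function.update_self]
      exact hx
    · rw [Function.update_of_ne hfe]
      exact hch f (Finset.mem_erase.mpr ⟨hfe, hfR⟩) hfT
  · intro v
    rw [filter_card_eq_add R e heR (fun f => f ∉ T ∧ Function.update ch e x f = v)]
    have h1 : R.filter (fun f => f ≠ e ∧ (f ∉ T ∧ Function.update ch e x f = v))
        = (R.erase e).filter (fun f => f ∉ T ∧ ch f = v) := by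
      ext f
      simp only [Finset.mem_filter, Finset.mem_erase]
      constructor
      · rintro ⟨hfR, hfe, hfT, hchf⟩
        rw [Function.update_of_ne hfe] at hchf
        exact ⟨⟨hfe, hfR⟩, hfT, hchf⟩
      · rintro ⟨⟨hfe, hfR⟩, hfT, hchf⟩
        refine ⟨hfR, hfe, hfT, ?_⟩
        rw [Function.update_of_ne hfe]
        exact hchf
    rw [h1]
    have h2 : (e ∉ T ∧ Function.update ch e x e = v) ↔ (v = x) := by
      rw [Function.update_self]
      constructor
      · rintro ⟨_, h'⟩; exact h'.symm
      · intro h'; exact ⟨heT, h'.symm⟩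
    show D v + (if v = x then 1 else 0) = _
    rw [hcount v]
    simp only [h2]
    by_cases hvx : v = x
    · simp only [if_pos hvx]
      push_cast
      ring
    · simp only [if_neg hvx]
      push_cast
      ring

/-- Removing a cotree edge together with its chip. -/
lemma BreakR.remove_chip {R : Finset G.E} {e : G.E} (heR : e ∈ R) {D : G.V → ℤ}
    {T : Finset G.E} (hT : G.TreeR R T) (heT : e ∉ T) {ch : G.E → G.V}
    (hch : ∀ f ∈ R, f ∉ T → ch f = (G.ends f).1 ∨ ch f = (G.ends f).2)
    (hcount : ∀ v, D v = ((R.filter (fun f => f ∉ T ∧ ch f = v)).card : ℤ)) :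
    G.BreakR (R.erase e) (fun w => D w - if w = ch e then 1 else 0) := by
  obtain ⟨hTsub, hTconn, hTcard⟩ := hT
  refine ⟨T, ⟨?_, hTconn, hTcard⟩, ch, ?_, ?_⟩
  · intro f hf
    exact Finset.mem_erase.mpr ⟨fun h' => heT (h' ▸ hf), hTsub hf⟩
  · intro f hfR hfT
    exact hch f (Finset.mem_erase.mp hfR).2 hfT
  · intro v
    have h1 : (R.erase e).filter (fun f => f ∉ T ∧ ch f = v)
        = R.filter (fun f => f ≠ e ∧ (f ∉ T ∧ ch f = v)) := by
      ext f
      simp only [Finset.mem_filter, Finset.mem_erase]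
      tauto
    have h3 := filter_card_eq_add R e heR (fun f => f ∉ T ∧ ch f = v)
    have h2 : (e ∉ T ∧ ch e = v) ↔ (v = ch e) := by
      constructor
      · rintro ⟨_, h'⟩; exact h'.symm
      · intro h'; exact ⟨heT, h'.symm⟩
    rw [h1]
    show D v - (if v = ch e then 1 else 0) = _
    rw [hcount v]
    simp only [h2] at h3
    by_cases hvx : v = ch e
    · simp only [if_pos hvx] at h3 ⊢
      rw [h3]
      push_cast
      ring
    · simp only [if_neg hvx] at h3 ⊢
      rw [h3]
      push_cast
      ring

section ContractW

variable {e : G.E} {huv : (G.ends e).1 ≠ (G.ends e).2}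

/-- Lifting a break divisor of the contraction. -/
lemma BreakR.contract_lift {R : Finset G.E} (heR : e ∈ R)
    {Db : (G.contract e huv).V → ℤ}
    (h : (G.contract e huv).BreakR (R.subtype (· ≠ e)) Db) :
    ∃ D : G.V → ℤ, G.BreakR R D ∧ pushD G e huv D = Db := by
  classical
  obtain ⟨Tb, ⟨hTsub, hTconn, hTcard⟩, chb, hchb, hcount⟩ := h
  set T : Finset G.E := insert e (Tb.map (Function.Embedding.subtype _)) with hTdef
  have heT : e ∈ T := Finset.mem_insert_self _ _
  have hmemT : ∀ (f : G.E) (hfe : f ≠ e), (f ∈ T ↔ (⟨f, hfe⟩ : {f : G.E // f ≠ e}) ∈ Tb) := by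
    intro f hfe
    simp only [hTdef, Finset.mem_insert, Finset.mem_map]
    constructor
    · rintro (rfl | ⟨fb, hfb, hval⟩)
      · exact absurd rfl hfe
      · have : fb = ⟨f, hfe⟩ := Subtype.ext hval
        rwa [← this]
    · intro hf
      exact Or.inr ⟨⟨f, hfe⟩, hf, rfl⟩
  set ch : G.E → G.V := fun f =>
    if hfe : f = e then (G.ends e).1 else
      (if G.cproj e huv (G.ends f).1 = chb ⟨f, hfe⟩ then (G.ends f).1 else (G.ends f).2)
    with hchdef
  set D : G.V → ℤ := fun v => ((R.filter (fun f => f ∉ T ∧ ch f = v)).card : ℤ) with hDdef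
  have hTreeR : G.TreeR R T := by
    refine ⟨?_, ?_, ?_⟩
    · intro f hf
      rcases Finset.mem_insert.mp hf with rfl | hf'
      · exact heR
      · obtain ⟨fb, hfb, hval⟩ := Finset.mem_map.mp hf'
        have := hTsub hfb
        rw [Finset.mem_subtype] at this
        rwa [← hval]
    · intro x y
      have := connectsVia_contract_lift (hTconn (G.cproj e huv x) (G.cproj e huv y)) x y rfl rfl
      exact this
    · have hcard : T.card = Tb.card + 1 := by
        rw [hTdef, Finset.card_insert_of_notMem, Finset.card_map]
        intro hmem
        obtain ⟨fb, _, hval⟩ := Finset.mem_map.mp hmem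
        exact fb.2 hval
      have hV : Fintype.card (G.contract e huv).V + 1 = Fintype.card G.V := card_contract_V
      omega
  have hpich : ∀ (f : G.E) (hfe : f ≠ e), f ∈ R → f ∉ T →
      G.cproj e huv (ch f) = chb ⟨f, hfe⟩ := by
    intro f hfe hfR hfT
    have hfb : (⟨f, hfe⟩ : {f : G.E // f ≠ e}) ∈ R.subtype (· ≠ e) :=
      Finset.mem_subtype.mpr hfR
    have hfbT : (⟨f, hfe⟩ : {f : G.E // f ≠ e}) ∉ Tb := fun hin => hfT ((hmemT f hfe).mpr hin)
    have hends := hchb ⟨f, hfe⟩ hfb hfbT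
    by_cases hc : G.cproj e huv (G.ends f).1 = chb ⟨f, hfe⟩
    · rw [hchdef]
      simp only [dif_neg hfe, if_pos hc]
      exact hc
    · rw [hchdef]
      simp only [dif_neg hfe, if_neg hc]
      rcases hends with h' | h'
      · exact absurd h'.symm hc
      · exact h'.symm
  refine ⟨D, ⟨T, hTreeR, ch, ?_, fun v => rfl⟩, ?_⟩
  · intro f hfR hfT
    have hfe : f ≠ e := fun h' => hfT (h' ▸ heT)
    rw [hchdef]
    simp only [dif_neg hfe]
    by_cases hc : G.cproj e huv (G.ends f).1 = chb ⟨f, hfe⟩ <;> simp [hc]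
  · funext xb
    have hkey : ∀ f, (f ∉ T ∧ G.cproj e huv (ch f) = xb) ↔
        ((f ∉ T ∧ ch f = xb.val) ∨ (f ∉ T ∧ (xb = ubar G e huv ∧ ch f = (G.ends e).2))) := by
      intro f
      rcases cproj_cases (huv := huv) (ch f) with hc | ⟨hc, hc'⟩
      · constructor
        · rintro ⟨hfT, hx⟩
          left
          exact ⟨hfT, by rw [← hx, hc]⟩
        · rintro (⟨hfT, hx⟩ | ⟨hfT, _, hx⟩)
          · refine ⟨hfT, ?_⟩
            apply Subtype.ext
            rw [hc, hx]
          · exfalso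
            have : (G.cproj e huv (ch f)).val = ch f := hc
            rw [hx] at this hc
            rw [cproj_snd] at this
            exact huv this
      · constructor
        · rintro ⟨hfT, hx⟩
          right
          exact ⟨hfT, by rw [← hx, hc'], hc⟩
        · rintro (⟨hfT, hx⟩ | ⟨hfT, hu, _⟩)
          · exact absurd (hx ▸ xb.2) (by rw [hc]; exact fun h' => h' rfl)
          · exact ⟨hfT, by rw [hc', hu]⟩
    have hsplit : ((R.filter (fun f => f ∉ T ∧ G.cproj e huv (ch f) = xb)).card : ℤ)
        = D xb.val + (if xb = ubar G e huv then D (G.ends e).2 else 0) := by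
      have hdisj : Disjoint (R.filter (fun f => f ∉ T ∧ ch f = xb.val))
          (R.filter (fun f => f ∉ T ∧ (xb = ubar G e huv ∧ ch f = (G.ends e).2))) := by
        refine Finset.disjoint_left.mpr ?_
        rintro f hf1 hf2
        rw [Finset.mem_filter] at hf1 hf2
        have h1 := hf1.2.2
        have h2 := hf2.2.2.2
        rw [h2] at h1
        exact xb.2 h1.symm
      have hun : R.filter (fun f => f ∉ T ∧ G.cproj e huv (ch f) = xb)
          = (R.filter (fun f => f ∉ T ∧ ch f = xb.val)) ∪
            (R.filter (fun f => f ∉ T ∧ (xb = ubar G e huv ∧ ch f = (G.ends e).2))) := by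
        rw [← Finset.filter_or]
        apply Finset.filter_congr
        intro f _
        exact hkey f
      rw [hun, Finset.card_union_of_disjoint hdisj]
      by_cases hu : xb = ubar G e huv
      · rw [if_pos hu]
        have e2 : R.filter (fun f => f ∉ T ∧ (xb = ubar G e huv ∧ ch f = (G.ends e).2))
            = R.filter (fun f => f ∉ T ∧ ch f = (G.ends e).2) := by
          apply Finset.filter_congr
          intro f _
          constructor
          · rintro ⟨hfT, _, hx⟩; exact ⟨hfT, hx⟩
          · rintro ⟨hfT, hx⟩; exact ⟨hfT, hu, hx⟩
        rw [e2]
        push_cast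
        rfl
      · rw [if_neg hu]
        have e2 : R.filter (fun f => f ∉ T ∧ (xb = ubar G e huv ∧ ch f = (G.ends e).2))
            = (∅ : Finset G.E) := by
          apply Finset.filter_false_of_mem
          rintro f _ ⟨_, hu', _⟩
          exact hu hu'
        rw [e2, Finset.card_empty, Nat.add_zero, add_zero]
    have hbij : ((R.subtype (· ≠ e)).filter (fun fb => fb ∉ Tb ∧ chb fb = xb)).card
        = (R.filter (fun f => f ∉ T ∧ G.cproj e huv (ch f) = xb)).card := by
      refine Finset.card_bij (fun fb _ => fb.val) ?_ ?_ ?_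
      · intro fb hfb
        rw [Finset.mem_filter] at hfb ⊢
        rw [Finset.mem_subtype] at hfb
        obtain ⟨hfR, hfbT, hchbv⟩ := hfb
        have hfT : fb.val ∉ T := by
          intro hin
          exact hfbT ((hmemT fb.val fb.2).mp hin)
        refine ⟨hfR, hfT, ?_⟩
        rw [hpich fb.val fb.2 hfR hfT]
        convert hchbv using 2 <;> exact Subtype.ext rfl
      · intro f _ g _ h'
        exact Subtype.ext h'
      · intro f hf
        rw [Finset.mem_filter] at hf
        obtain ⟨hfR, hfT, hx⟩ := hf
        have hfe : f ≠ e := fun h' => hfT (h' ▸ heT)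
        refine ⟨⟨f, hfe⟩, ?_, rfl⟩
        rw [Finset.mem_filter, Finset.mem_subtype]
        refine ⟨hfR, fun hin => hfT ((hmemT f hfe).mpr hin), ?_⟩
        rw [← hpich f hfe hfR hfT]
        exact hx
    show D xb.val + (if xb = ubar G e huv then D (G.ends e).2 else 0) = Db xb
    rw [hcount xb, hbij]
    exact hsplit.symm

end ContractW

end Multigraph
namespace Multigraph

open Finset

variable {G : Multigraph}

lemma exists_nonloop_step {S : Finset G.E} {x y : G.V} (h : G.ConnectsVia S x y)
    (hxy : x ≠ y) : ∃ f ∈ S, (G.ends f).1 ≠ (G.ends f).2 := by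
  induction h with
  | refl => exact absurd rfl hxy
  | @tail b c _ hstep ih =>
    by_cases hbc : b = c
    · exact ih (hbc ▸ hxy)
    · obtain ⟨f, hf, h'⟩ := hstep
      refine ⟨f, hf, ?_⟩
      rcases h' with h' | h'
      · rw [h']; exact hbc
      · rw [h']; exact fun h'' => hbc h''.symm

lemma exists_pair_ne_of_two_le_card (h : 2 ≤ Fintype.card G.V) : ∃ x y : G.V, x ≠ y := by
  obtain ⟨x, y, hxy⟩ := Fintype.exists_pair_of_one_lt_card (α := G.V) (by omega)
  exact ⟨x, y, hxy⟩

/-- Any edge set connecting all vertices has at least `#V - 1` elements. -/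
lemma card_connects : ∀ (N : ℕ) (G : Multigraph), Fintype.card G.E ≤ N →
    ∀ S : Finset G.E, (∀ x y : G.V, G.ConnectsVia S x y) →
    Fintype.card G.V ≤ S.card + 1 := by
  intro N
  induction N with
  | zero =>
    intro G hE S hconn
    by_cases hV : Fintype.card G.V ≤ 1
    · omega
    · obtain ⟨x, y, hxy⟩ := exists_pair_ne_of_two_le_card (G := G) (by omega)
      obtain ⟨f, _, _⟩ := exists_nonloop_step (hconn x y) hxy
      have : 0 < Fintype.card G.E := Fintype.card_pos_iff.mpr ⟨f⟩
      omega
  | succ N ih =>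
    intro G hE S hconn
    by_cases hV : Fintype.card G.V ≤ 1
    · omega
    · obtain ⟨x, y, hxy⟩ := exists_pair_ne_of_two_le_card (G := G) (by omega)
      obtain ⟨f, hfS, huv⟩ := exists_nonloop_step (hconn x y) hxy
      have hE' : Fintype.card (G.contract f huv).E ≤ N := by
        have := card_contract_E (G := G) (e := f) (huv := huv)
        omega
      have hconn' : ∀ xb yb : (G.contract f huv).V,
          (G.contract f huv).ConnectsVia (S.subtype (· ≠ f)) xb yb := by
        intro xb yb
        have := (hconn xb.val yb.val).contract_push (e := f) (huv := huv)
        rwa [cproj_val, cproj_val] at this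
      have hIH := ih (G.contract f huv) hE' (S.subtype (· ≠ f)) hconn'
      have h1 := card_contract_V (G := G) (e := f) (huv := huv)
      have h2 := card_subtype_ne (G := G) (e := f) hfS
      omega

/-- Trees contain no loops. -/
lemma TreeR.not_mem_of_loop {R T : Finset G.E} (hT : G.TreeR R T) {f : G.E}
    (hl : (G.ends f).1 = (G.ends f).2) : f ∉ T := by
  intro hfT
  obtain ⟨hTsub, hTconn, hTcard⟩ := hT
  have hconn' : ∀ x y : G.V, G.ConnectsVia (T.erase f) x y := by
    intro x y
    exact (hTconn x y).erase_loop hl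
  have := card_connects (Fintype.card G.E) G le_rfl (T.erase f) hconn'
  rw [Finset.card_erase_of_mem hfT] at this
  have : 1 ≤ T.card := Finset.card_pos.mpr ⟨f, hfT⟩
  omega

section ContractT

variable {e : G.E} {huv : (G.ends e).1 ≠ (G.ends e).2}

lemma TreeR.contract_lift {R : Finset G.E} (heR : e ∈ R)
    {Tb : Finset (G.contract e huv).E}
    (hTb : (G.contract e huv).TreeR (R.subtype (· ≠ e)) Tb) :
    G.TreeR R (insert e (Tb.map (Function.Embedding.subtype _))) := by
  obtain ⟨hTsub, hTconn, hTcard⟩ := hTb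
  refine ⟨?_, ?_, ?_⟩
  · intro f hf
    rcases Finset.mem_insert.mp hf with rfl | hf'
    · exact heR
    · obtain ⟨fb, hfb, hval⟩ := Finset.mem_map.mp hf'
      have := hTsub hfb
      rw [Finset.mem_subtype] at this
      rwa [← hval]
  · intro x y
    exact connectsVia_contract_lift (hTconn (G.cproj e huv x) (G.cproj e huv y)) x y rfl rfl
  · have hcard : (insert e (Tb.map (Function.Embedding.subtype fun f => f ≠ e))).card
        = Tb.card + 1 := by
      rw [Finset.card_insert_of_notMem, Finset.card_map]
      intro hmem
      obtain ⟨fb, _, hval⟩ := Finset.mem_map.mp hmem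
      exact fb.2 hval
    have hV : Fintype.card (G.contract e huv).V + 1 = Fintype.card G.V := card_contract_V
    omega

lemma TreeR.contract_push {R T : Finset G.E} (hT : G.TreeR R T) (heT : e ∈ T) :
    (G.contract e huv).TreeR (R.subtype (· ≠ e)) (T.subtype (· ≠ e)) := by
  obtain ⟨hTsub, hTconn, hTcard⟩ := hT
  refine ⟨?_, ?_, ?_⟩
  · intro fb hfb
    rw [Finset.mem_subtype] at hfb ⊢
    exact hTsub hfb
  · intro xb yb
    have := (hTconn xb.val yb.val).contract_push (e := e) (huv := huv)
    rwa [cproj_val, cproj_val] at this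
  · have h1 := card_subtype_ne (G := G) (e := e) heT
    have h2 := card_contract_V (G := G) (e := e) (huv := huv)
    omega

end ContractT

/-- Spanning tree existence. -/
lemma tree_exists : ∀ (N : ℕ) (G : Multigraph), Fintype.card G.E ≤ N →
    Nonempty G.V → ∀ R : Finset G.E, G.ConnR R → ∃ T, G.TreeR R T := by
  intro N
  induction N with
  | zero =>
    intro G hE hne R hconn
    by_cases hV : Fintype.card G.V ≤ 1
    · have h0 : 0 < Fintype.card G.V := Fintype.card_pos_iff.mpr hne
      refine ⟨∅, Finset.empty_subset _, ?_, ?_⟩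
      · intro x y
        have : x = y := Fintype.card_le_one_iff.mp hV x y
        rw [this]
        exact Relation.ReflTransGen.refl
      · rw [Finset.card_empty]; omega
    · obtain ⟨x, y, hxy⟩ := exists_pair_ne_of_two_le_card (G := G) (by omega)
      obtain ⟨f, _, _⟩ := exists_nonloop_step (hconn x y) hxy
      have : 0 < Fintype.card G.E := Fintype.card_pos_iff.mpr ⟨f⟩
      omega
  | succ N ih =>
    intro G hE hne R hconn
    by_cases hV : Fintype.card G.V ≤ 1
    · have h0 : 0 < Fintype.card G.V := Fintype.card_pos_iff.mpr hne
      refine ⟨∅, Finset.empty_subset _, ?_, ?_⟩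
      · intro x y
        have : x = y := Fintype.card_le_one_iff.mp hV x y
        rw [this]
        exact Relation.ReflTransGen.refl
      · rw [Finset.card_empty]; omega
    · obtain ⟨x, y, hxy⟩ := exists_pair_ne_of_two_le_card (G := G) (by omega)
      obtain ⟨f, hfR, huv⟩ := exists_nonloop_step (hconn x y) hxy
      have hE' : Fintype.card (G.contract f huv).E ≤ N := by
        have := card_contract_E (G := G) (e := f) (huv := huv)
        omega
      obtain ⟨Tb, hTb⟩ := ih (G.contract f huv) hE' ⟨ubar G f huv⟩
        (R.subtype (· ≠ f)) (hconn.contract_push)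
      exact ⟨_, TreeR.contract_lift hfR hTb⟩

end Multigraph
namespace Multigraph

open Finset

variable {G : Multigraph}

lemma mEdges_erase {R : Finset G.E} {f : G.E} (hfR : f ∈ R) (A : Finset G.V) :
    G.mEdges R A = G.mEdges (R.erase f) A
      + (if (G.ends f).1 ∈ A ∧ (G.ends f).2 ∈ A then 1 else 0) := by
  unfold mEdges
  rw [filter_card_eq_add R f hfR (fun g => (G.ends g).1 ∈ A ∧ (G.ends g).2 ∈ A)]
  have h1 : R.filter (fun g => g ≠ f ∧ ((G.ends g).1 ∈ A ∧ (G.ends g).2 ∈ A))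
      = (R.erase f).filter (fun g => (G.ends g).1 ∈ A ∧ (G.ends g).2 ∈ A) := by
    ext g
    simp only [Finset.mem_filter, Finset.mem_erase]
    tauto
  rw [h1]

lemma sum_add_delta (A : Finset G.V) (D : G.V → ℤ) (c : G.V) :
    ∑ x ∈ A, (D x + if x = c then 1 else 0)
      = ∑ x ∈ A, D x + (if c ∈ A then 1 else 0) := by
  rw [Finset.sum_add_distrib]
  congr 1
  rw [Finset.sum_ite_eq' A c (fun _ => (1 : ℤ))]

lemma sum_sub_delta (A : Finset G.V) (D : G.V → ℤ) (c : G.V) :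
    ∑ x ∈ A, (D x - if x = c then 1 else 0)
      = ∑ x ∈ A, D x - (if c ∈ A then 1 else 0) := by
  rw [Finset.sum_sub_distrib]
  congr 1
  rw [Finset.sum_ite_eq' A c (fun _ => (1 : ℤ))]

lemma deg_of_break {R T : Finset G.E} (hTsub : T ⊆ R) {ch : G.E → G.V} {D : G.V → ℤ}
    (hcount : ∀ v, D v = ((R.filter (fun f => f ∉ T ∧ ch f = v)).card : ℤ)) :
    ∑ v, D v = (R.card : ℤ) - T.card := by
  have h1 : (R.filter (fun f => f ∉ T)).card
      = ∑ v, ((R.filter (fun f => f ∉ T)).filter (fun f => ch f = v)).card := by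
    exact Finset.card_eq_sum_card_fiberwise (fun x _ => Finset.mem_univ (ch x))
  have h2 : ∀ v, (R.filter (fun f => f ∉ T)).filter (fun f => ch f = v)
      = R.filter (fun f => f ∉ T ∧ ch f = v) := by
    intro v
    rw [Finset.filter_filter]
  have h3 : R.filter (fun f => f ∉ T) = R \ T := (Finset.sdiff_eq_filter R T).symm
  have h4 : (R \ T).card = R.card - T.card := Finset.card_sdiff_of_subset hTsub
  have h5 : T.card ≤ R.card := Finset.card_le_card hTsub
  have h6 : ∑ v, D v = ((R.filter (fun f => f ∉ T)).card : ℤ) := by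
    rw [h1]
    push_cast
    apply Finset.sum_congr rfl
    intro v _
    rw [hcount v, h2 v]
  rw [h6, h3]
  omega

/-- Necessity: break divisors satisfy the constraints. -/
lemma necessity : ∀ (M : ℕ) (G : Multigraph) (R : Finset G.E) (D : G.V → ℤ),
    Fintype.card G.E + R.card ≤ M → G.BreakR R D → G.ConstrR R D := by
  intro M
  induction M using Nat.strong_induction_on with
  | _ M ih =>
  intro G R D hM hD
  obtain ⟨T, hT, ch, hch, hcount⟩ := hD
  obtain ⟨hTsub, hTconn, hTcard⟩ := hT
  have hnn : ∀ v, 0 ≤ D v := fun v => by rw [hcount v]; exact Int.natCast_nonneg _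
  have hdeg : ∑ v, D v = (R.card : ℤ) - Fintype.card G.V + 1 := by
    rw [deg_of_break hTsub hcount]
    have : (T.card : ℤ) + 1 = Fintype.card G.V := by exact_mod_cast hTcard
    omega
  refine ⟨hnn, hdeg, ?_⟩
  by_cases hex : ∃ f ∈ R, f ∉ T
  · -- delete a cotree edge
    obtain ⟨f, hfR, hfT⟩ := hex
    have hrec := ih (Fintype.card G.E + (R.erase f).card)
      (by
        rw [Finset.card_erase_of_mem hfR]
        have : 1 ≤ R.card := Finset.card_pos.mpr ⟨f, hfR⟩
        omega)
      G (R.erase f) _ le_rfl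
      (BreakR.remove_chip hfR ⟨hTsub, hTconn, hTcard⟩ hfT hch hcount)
    obtain ⟨_, _, hineq'⟩ := hrec
    intro A hA
    have h1 := hineq' A hA
    have h2 := mEdges_erase hfR A
    have h3 := sum_sub_delta A D (ch f)
    simp only at h1
    rw [h3] at h1
    have h4 : (if (G.ends f).1 ∈ A ∧ (G.ends f).2 ∈ A then (1:ℕ) else 0) = 1 →
        (if ch f ∈ A then (1:ℤ) else 0) = 1 := by
      intro hif
      have hin : (G.ends f).1 ∈ A ∧ (G.ends f).2 ∈ A := by
        by_contra hcon
        rw [if_neg hcon] at hif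
        omega
      rcases hch f hfR hfT with h' | h' <;> rw [if_pos (by rw [h']; tauto)]
    by_cases hc1 : (G.ends f).1 ∈ A ∧ (G.ends f).2 ∈ A
    · have h5 := h4 (by rw [if_pos hc1])
      rw [if_pos hc1] at h2
      rw [h5] at h1
      push_cast [h2]
      omega
    · rw [if_neg hc1, Nat.add_zero] at h2
      rw [h2]
      have h6 : (0:ℤ) ≤ (if ch f ∈ A then (1:ℤ) else 0) := by split_ifs <;> omega
      omega
  · -- R = T : the tree case
    have hRT : T = R := by
      apply Finset.Subset.antisymm hTsub
      intro f hfR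
      by_contra hfT
      exact hex ⟨f, hfR, hfT⟩
    subst hRT
    intro A hA
    have hsumA : ∑ x ∈ A, D x = 0 := by
      apply Finset.sum_eq_zero
      intro x _
      rw [hcount x]
      have : T.filter (fun f => f ∉ T ∧ ch f = x) = ∅ := by
        apply Finset.filter_false_of_mem
        rintro f hf ⟨hnf, _⟩
        exact hnf hf
      rw [this]
      simp
    rw [hsumA]
    -- goal : mEdges T A - |A| + 1 ≤ 0
    by_cases hV1 : Fintype.card G.V ≤ 1
    · -- single vertex : T = ∅
      have hT0 : T.card = 0 := by omega
      have hTe : T = ∅ := Finset.card_eq_zero.mp hT0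
      subst hTe
      have hm : G.mEdges ∅ A = 0 := by
        unfold mEdges
        simp
      rw [hm]
      have : 1 ≤ A.card := Finset.card_pos.mpr hA
      push_cast
      omega
    · obtain ⟨x, y, hxy⟩ := exists_pair_ne_of_two_le_card (G := G) (by omega)
      obtain ⟨f, hfT, huv⟩ := exists_nonloop_step (hTconn x y) hxy
      have hE' : Fintype.card (G.contract f huv).E + 1 = Fintype.card G.E :=
        card_contract_E
      have hR' : (T.subtype (· ≠ f)).card + 1 = T.card := card_subtype_ne hfT
      have hTb : (G.contract f huv).TreeR (T.subtype (· ≠ f)) (T.subtype (· ≠ f)) :=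
        TreeR.contract_push ⟨Finset.Subset.refl T, hTconn, hTcard⟩ hfT
      have hBb : (G.contract f huv).BreakR (T.subtype (· ≠ f)) (fun _ => 0) := by
        refine ⟨T.subtype (· ≠ f), hTb, fun _ => ubar G f huv, ?_, ?_⟩
        · intro fb hin hnin
          exact absurd hin hnin
        · intro v
          simp only []
          symm
          rw [Int.natCast_eq_zero, Finset.card_eq_zero]
          apply Finset.filter_false_of_mem
          rintro fb hfb ⟨hnfb, _⟩
          exact hnfb hfb
      have hrec := ih (Fintype.card (G.contract f huv).E + (T.subtype (· ≠ f)).card)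
        (by omega) (G.contract f huv) (T.subtype (· ≠ f)) _ le_rfl hBb
      obtain ⟨_, _, hineq'⟩ := hrec
      have hAim : (A.image (G.cproj f huv)).Nonempty := hA.image _
      have h1 := hineq' (A.image (G.cproj f huv)) hAim
      simp only [Finset.sum_const_zero] at h1
      have h3 := mEdges_le_contract (huv := huv) hfT A
      by_cases hc1 : (G.ends f).1 ∈ A ∧ (G.ends f).2 ∈ A
      · have h4 := card_image_cproj_lt (huv := huv) hc1.1 hc1.2
        rw [if_pos hc1] at h3
        push_cast at h1 ⊢
        omega
      · have h4 := Finset.card_image_le (s := A) (f := G.cproj f huv)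
        rw [if_neg hc1, Nat.add_zero] at h3
        push_cast at h1 ⊢
        omega

end Multigraph
namespace Multigraph

open Finset

variable {G : Multigraph}

lemma ConnR.erase_loop' {R : Finset G.E} {l : G.E} (hl : (G.ends l).1 = (G.ends l).2)
    (h : G.ConnR R) : G.ConnR (R.erase l) :=
  fun x y => (h x y).erase_loop hl

lemma ConnR.of_tree_erase {R T : Finset G.E} (hT : G.TreeR R T) {e : G.E} (heT : e ∉ T) :
    G.ConnR (R.erase e) := by
  intro x y
  refine (hT.2.1 x y).mono ?_
  intro f hf
  exact Finset.mem_erase.mpr ⟨fun h' => heT (h' ▸ hf), hT.1 hf⟩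

/-- Sufficiency: divisors satisfying the constraints are break divisors. -/
lemma sufficiency : ∀ (M : ℕ) (G : Multigraph) (R : Finset G.E) (D : G.V → ℤ),
    Fintype.card G.E + R.card ≤ M → Nonempty G.V → G.ConnR R →
    G.ConstrR R D → G.BreakR R D := by
  intro M
  induction M using Nat.strong_induction_on with
  | _ M ih =>
  intro G R D hM hne hconn hC
  obtain ⟨hnn, hdeg, hineq⟩ := hC
  have hn1 : 1 ≤ Fintype.card G.V := Fintype.card_pos_iff.mpr hne
  by_cases hsmall : R.card + 1 ≤ Fintype.card G.V
  · -- base case : R itself is a tree and D = 0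
    have hdeg0 : ∑ v, D v = 0 := by
      have h0 : 0 ≤ ∑ v, D v := Finset.sum_nonneg (fun v _ => hnn v)
      have h1 : (R.card : ℤ) + 1 ≤ (Fintype.card G.V : ℤ) := by exact_mod_cast hsmall
      omega
    have hD0 : ∀ v, D v = 0 := by
      intro v
      have := (Finset.sum_eq_zero_iff_of_nonneg (fun v _ => hnn v)).mp hdeg0
      exact this v (Finset.mem_univ v)
    have hcard : R.card + 1 = Fintype.card G.V := by
      have : (R.card : ℤ) - Fintype.card G.V + 1 = 0 := by omega
      push_cast at this ⊢
      omega
    refine ⟨R, ⟨Finset.Subset.refl R, hconn, hcard⟩, fun f => (G.ends f).1, ?_, ?_⟩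
    · intro f hfR hfT
      exact absurd hfR hfT
    · intro v
      rw [hD0 v]
      symm
      rw [Int.natCast_eq_zero, Finset.card_eq_zero]
      apply Finset.filter_false_of_mem
      rintro f hf ⟨hnf, _⟩
      exact hnf hf
  · -- R has at least #V edges
    by_cases hloop : ∃ l ∈ R, (G.ends l).1 = (G.ends l).2
    · -- loop reduction
      obtain ⟨l, hlR, hl⟩ := hloop
      set z := (G.ends l).1 with hz
      have hzz : (G.ends l).2 = z := hl.symm
      have hDz : 1 ≤ D z := by
        have h1 := hineq {z} ⟨z, Finset.mem_singleton_self z⟩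
        have h2 : 1 ≤ G.mEdges R {z} := by
          apply Finset.card_pos.mpr
          exact ⟨l, Finset.mem_filter.mpr ⟨hlR, by rw [← hz, Finset.mem_singleton],
            by rw [hzz, Finset.mem_singleton]⟩⟩
        rw [Finset.sum_singleton, Finset.card_singleton] at h1
        have h2' : (1 : ℤ) ≤ (G.mEdges R {z} : ℤ) := by exact_mod_cast h2
        omega
      have hC' : G.ConstrR (R.erase l) (fun w => D w - if w = z then 1 else 0) := by
        refine ⟨?_, ?_, ?_⟩
        · intro w
          by_cases hw : w = z
          · subst hw; simp only [if_pos rfl]; omega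
          · simp only [if_neg hw]; have := hnn w; omega
        · rw [sum_sub_delta Finset.univ D z]
          rw [if_pos (Finset.mem_univ z), Finset.card_erase_of_mem hlR]
          have h1 : 1 ≤ R.card := Finset.card_pos.mpr ⟨l, hlR⟩
          have h2 : ((R.card - 1 : ℕ) : ℤ) = (R.card : ℤ) - 1 := by
            push_cast
            omega
          rw [hdeg, h2]
          ring
        · intro A hA
          have h1 := hineq A hA
          have h2 := mEdges_erase hlR A
          rw [sum_sub_delta A D z]
          by_cases hzA : z ∈ A
          · rw [if_pos hzA]
            rw [if_pos ⟨(hz ▸ hzA), (hzz.symm ▸ hzA)⟩] at h2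
            have h2' : (G.mEdges R A : ℤ) = (G.mEdges (R.erase l) A : ℤ) + 1 := by
              exact_mod_cast h2
            omega
          · rw [if_neg hzA]
            rw [if_neg (fun hcon => hzA (hz ▸ hcon.1)), Nat.add_zero] at h2
            rw [← h2]
            omega
      have hrec := ih (Fintype.card G.E + (R.erase l).card)
        (by
          rw [Finset.card_erase_of_mem hlR]
          have : 1 ≤ R.card := Finset.card_pos.mpr ⟨l, hlR⟩
          omega)
        G (R.erase l) _ le_rfl hne (hconn.erase_loop' hl) hC'
      have hB := BreakR.add_chip hlR (Or.inl hz) hrec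
      have heq : (fun w => (D w - if w = z then 1 else 0) + if w = z then 1 else 0) = D := by
        funext w
        ring
      rwa [heq] at hB
    · -- no loops : pick a non-tree edge and delete/contract
      push_neg at hloop
      obtain ⟨T₀, hT₀⟩ := tree_exists (Fintype.card G.E) G le_rfl hne R hconn
      have hT₀R := hT₀.1
      have hT₀card := hT₀.2.2
      have hex : ∃ e ∈ R, e ∉ T₀ := by
        by_contra hcon
        push_neg at hcon
        have : R ⊆ T₀ := hcon
        have := Finset.card_le_card this
        omega
      obtain ⟨e, heR, heT₀⟩ := hex
      have huv : (G.ends e).1 ≠ (G.ends e).2 := hloop e heR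
      have hconn' : G.ConnR (R.erase e) := ConnR.of_tree_erase hT₀ heT₀
      have hcount : 1 ≤ R.card := Finset.card_pos.mpr ⟨e, heR⟩
      -- the deletion step, for any divisor satisfying the shifted constraints
      have hstepdel : ∀ D₀ : G.V → ℤ, (∀ v, 0 ≤ D₀ v) →
          (∑ v, D₀ v = (R.card : ℤ) - Fintype.card G.V + 1) →
          (∀ A : Finset G.V, A.Nonempty → (G.mEdges R A : ℤ) - A.card + 1 ≤ ∑ x ∈ A, D₀ x) →
          1 ≤ D₀ (G.ends e).1 →
          (∀ A : Finset G.V, A.Nonempty → (G.ends e).1 ∈ A → (G.ends e).2 ∉ A →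
            (G.mEdges R A : ℤ) - A.card + 1 ≤ (∑ x ∈ A, D₀ x) - 1) →
          G.BreakR (R.erase e) (fun w => D₀ w - if w = (G.ends e).1 then 1 else 0) := by
        intro D₀ hnn₀ hdeg₀ hineq₀ hu₀ hP₀
        refine ih (Fintype.card G.E + (R.erase e).card)
          (by rw [Finset.card_erase_of_mem heR]; omega)
          G (R.erase e) _ le_rfl hne hconn' ⟨?_, ?_, ?_⟩
        · intro w
          by_cases hw : w = (G.ends e).1
          · subst hw; simp only [if_pos rfl]; omega
          · simp only [if_neg hw]; have := hnn₀ w; omega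
        · rw [sum_sub_delta Finset.univ D₀ (G.ends e).1,
            if_pos (Finset.mem_univ _), Finset.card_erase_of_mem heR]
          have h2 : ((R.card - 1 : ℕ) : ℤ) = (R.card : ℤ) - 1 := by push_cast; omega
          rw [hdeg₀, h2]
          ring
        · intro A hA
          have h2 := mEdges_erase heR A
          rw [sum_sub_delta A D₀ (G.ends e).1]
          by_cases huA : (G.ends e).1 ∈ A
          · rw [if_pos huA]
            by_cases hvA : (G.ends e).2 ∈ A
            · have h1 := hineq₀ A hA
              rw [if_pos ⟨huA, hvA⟩] at h2
              have h2' : (G.mEdges R A : ℤ) = (G.mEdges (R.erase e) A : ℤ) + 1 := by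
                exact_mod_cast h2
              omega
            · have h1 := hP₀ A hA huA hvA
              rw [if_neg (fun hcon => hvA hcon.2), Nat.add_zero] at h2
              rw [← h2]
              omega
          · rw [if_neg huA]
            have h1 := hineq₀ A hA
            rw [if_neg (fun hcon => huA hcon.1), Nat.add_zero] at h2
            rw [← h2]
            omega
      by_cases hP : (1 ≤ D (G.ends e).1) ∧ (∀ A : Finset G.V, A.Nonempty → (G.ends e).1 ∈ A →
          (G.ends e).2 ∉ A → (G.mEdges R A : ℤ) - A.card + 1 ≤ (∑ x ∈ A, D x) - 1)
      · -- chip at u can be removed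
        have hB := BreakR.add_chip heR (Or.inl rfl) (hstepdel D hnn hdeg hineq hP.1 hP.2)
        have heq : (fun w => (D w - if w = (G.ends e).1 then 1 else 0)
            + if w = (G.ends e).1 then 1 else 0) = D := by
          funext w; ring
        rwa [heq] at hB
      · -- contraction case
        -- facts about divisors with the same pushforward
        have hagree : ∀ D₀ : G.V → ℤ, pushD G e huv D₀ = pushD G e huv D →
            (∀ x, x ≠ (G.ends e).1 → x ≠ (G.ends e).2 → D₀ x = D x) ∧
            D₀ (G.ends e).1 + D₀ (G.ends e).2 = D (G.ends e).1 + D (G.ends e).2 := by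
          intro D₀ hp
          constructor
          · intro x hxu hxv
            have h1 := congrFun hp ⟨x, hxv⟩
            have hnu : (⟨x, hxv⟩ : (G.contract e huv).V) ≠ ubar G e huv := by
              intro h'
              exact hxu (congrArg Subtype.val h')
            simp only [pushD, if_neg hnu, add_zero] at h1
            exact h1
          · have h1 := congrFun hp (ubar G e huv)
            simp only [pushD, if_pos rfl] at h1
            exact h1
        -- lower bound for the u-coordinate of any break divisor in the fibre
        have hge : ∀ D₀ : G.V → ℤ, G.BreakR R D₀ → pushD G e huv D₀ = pushD G e huv D →
            D (G.ends e).1 ≤ D₀ (G.ends e).1 := by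
          intro D₀ hB₀ hp
          obtain ⟨hnn₀, hdeg₀, hineq₀⟩ :=
            necessity (Fintype.card G.E + R.card) G R D₀ le_rfl hB₀
          rcases not_and_or.mp hP with h1 | h2
          · push_neg at h1
            have := hnn₀ (G.ends e).1
            omega
          · push_neg at h2
            obtain ⟨A, hA, huA, hvA, hlt⟩ := h2
            have hup := hineq A hA
            have heqA : ∑ x ∈ A, D x = (G.mEdges R A : ℤ) - A.card + 1 := by omega
            have h0 := hineq₀ A hA
            have hdiff : ∑ x ∈ A, D₀ x - ∑ x ∈ A, D x
                = D₀ (G.ends e).1 - D (G.ends e).1 := by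
              rw [← Finset.sum_sub_distrib]
              rw [Finset.sum_eq_single_of_mem (G.ends e).1 huA]
              intro b hbA hbu
              have hbv : b ≠ (G.ends e).2 := fun h' => hvA (h' ▸ hbA)
              rw [(hagree D₀ hp).1 b hbu hbv]
              ring
            omega
        -- pushforward satisfies the constraints downstairs
        have hCb : (G.contract e huv).ConstrR (R.subtype (· ≠ e)) (pushD G e huv D) := by
          refine ⟨?_, ?_, ?_⟩
          · intro xb
            unfold pushD
            have h1 := hnn xb.val
            have h2 := hnn (G.ends e).2
            split_ifs <;> omega
          · rw [sum_pushD_univ, hdeg]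
            have h1 := card_subtype_ne (G := G) (e := e) heR
            have h2 := card_contract_V (G := G) (e := e) (huv := huv)
            push_cast [← h1, ← h2]
            ring
          · intro Ab hAb
            have h1 := hineq (liftA G e huv Ab) (liftA_nonempty hAb)
            rw [sum_liftA] at h1
            have h2 := mEdges_contract (huv := huv) heR Ab
            have h3 := card_liftA (huv := huv) Ab
            by_cases hu : ubar G e huv ∈ Ab
            · rw [if_pos hu] at h2 h3
              have h2' : ((G.contract e huv).mEdges (R.subtype (· ≠ e)) Ab : ℤ) + 1
                  = (G.mEdges R (liftA G e huv Ab) : ℤ) := by exact_mod_cast h2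
              have h3' : ((liftA G e huv Ab).card : ℤ) = (Ab.card : ℤ) + 1 := by
                exact_mod_cast h3
              omega
            · rw [if_neg hu, Nat.add_zero] at h2 h3
              have h2' : ((G.contract e huv).mEdges (R.subtype (· ≠ e)) Ab : ℤ)
                  = (G.mEdges R (liftA G e huv Ab) : ℤ) := by exact_mod_cast h2
              have h3' : ((liftA G e huv Ab).card : ℤ) = (Ab.card : ℤ) := by exact_mod_cast h3
              omega
        have hEc := card_contract_E (G := G) (e := e) (huv := huv)
        have hRc := card_subtype_ne (G := G) (e := e) heR
        have hrecb := ih (Fintype.card (G.contract e huv).E + (R.subtype (· ≠ e)).card)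
          (by omega)
          (G.contract e huv) (R.subtype (· ≠ e)) _ le_rfl ⟨ubar G e huv⟩
          (hconn.contract_push) hCb
        obtain ⟨D₀, hB₀, hp₀⟩ := BreakR.contract_lift heR hrecb
        -- climb down to D
        have hfinish : ∀ D₀ : G.V → ℤ, G.BreakR R D₀ →
            pushD G e huv D₀ = pushD G e huv D → D₀ (G.ends e).1 = D (G.ends e).1 →
            G.BreakR R D := by
          intro D₁ hB₁ hp₁ hu₁
          have heqD : D₁ = D := by
            funext x
            by_cases hxv : x = (G.ends e).2
            · subst hxv
              have := (hagree D₁ hp₁).2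
              omega
            · by_cases hxu : x = (G.ends e).1
              · subst hxu; exact hu₁
              · exact (hagree D₁ hp₁).1 x hxu hxv
          rwa [heqD] at hB₁
        have hclimb : ∀ (k : ℕ) (D₁ : G.V → ℤ), G.BreakR R D₁ →
            pushD G e huv D₁ = pushD G e huv D →
            D₁ (G.ends e).1 - D (G.ends e).1 ≤ (k : ℤ) → G.BreakR R D := by
          intro k
          induction k with
          | zero =>
            intro D₁ hB₁ hp₁ hle
            have hge₁ := hge D₁ hB₁ hp₁
            exact hfinish D₁ hB₁ hp₁ (by omega)
          | succ k ihk =>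
            intro D₁ hB₁ hp₁ hle
            have hge₁ := hge D₁ hB₁ hp₁
            by_cases heq₁ : D₁ (G.ends e).1 = D (G.ends e).1
            · exact hfinish D₁ hB₁ hp₁ heq₁
            · -- step down
              obtain ⟨hnn₁, hdeg₁, hineq₁⟩ :=
                necessity (Fintype.card G.E + R.card) G R D₁ le_rfl hB₁
              have hgt : D (G.ends e).1 + 1 ≤ D₁ (G.ends e).1 := by omega
              have hP₁ : ∀ A : Finset G.V, A.Nonempty → (G.ends e).1 ∈ A →
                  (G.ends e).2 ∉ A →
                  (G.mEdges R A : ℤ) - A.card + 1 ≤ (∑ x ∈ A, D₁ x) - 1 := by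
                intro A hA huA hvA
                have h1 := hineq A hA
                have hdiff : ∑ x ∈ A, D₁ x - ∑ x ∈ A, D x
                    = D₁ (G.ends e).1 - D (G.ends e).1 := by
                  rw [← Finset.sum_sub_distrib]
                  rw [Finset.sum_eq_single_of_mem (G.ends e).1 huA]
                  intro b hbA hbu
                  have hbv : b ≠ (G.ends e).2 := fun h' => hvA (h' ▸ hbA)
                  rw [(hagree D₁ hp₁).1 b hbu hbv]
                  ring
                omega
              have hu₁ : 1 ≤ D₁ (G.ends e).1 := by
                have := hnn (G.ends e).1
                omega
              have hBdel := hstepdel D₁ hnn₁ hdeg₁ hineq₁ hu₁ hP₁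
              have hBup := BreakR.add_chip heR (Or.inr rfl) hBdel
              set D₂ : G.V → ℤ := fun w => (D₁ w - if w = (G.ends e).1 then 1 else 0)
                + if w = (G.ends e).2 then 1 else 0 with hD₂
              have hp₂ : pushD G e huv D₂ = pushD G e huv D := by
                rw [← hp₁]
                funext xb
                by_cases hx : xb = ubar G e huv
                · subst hx
                  simp only [pushD, if_pos rfl, hD₂]
                  have h1 : (ubar G e huv).val = (G.ends e).1 := rfl
                  rw [h1]
                  simp only [if_pos rfl, if_neg huv, if_neg (Ne.symm huv), if_true]
                  ring
                · have hval1 : xb.val ≠ (G.ends e).1 := by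
                    intro h'
                    exact hx (Subtype.ext h')
                  have hval2 : xb.val ≠ (G.ends e).2 := xb.2
                  simp only [pushD, if_neg hx, hD₂, if_neg hval1, if_neg hval2]
                  ring
              have hd₂ : D₂ (G.ends e).1 = D₁ (G.ends e).1 - 1 := by
                rw [hD₂]
                simp only [if_pos rfl, if_neg huv, if_true]
                ring
              apply ihk D₂ hBup hp₂
              rw [hd₂]
              push_cast
              omega
        apply hclimb (D₀ (G.ends e).1 - D (G.ends e).1).toNat D₀ hB₀ hp₀
        exact Int.self_le_toNat _

end Multigraph
namespace Multigraph

open Finset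

variable {G : Multigraph}

lemma BreakR.nonneg {R : Finset G.E} {D : G.V → ℤ} (h : G.BreakR R D) (v : G.V) :
    0 ≤ D v := by
  obtain ⟨T, _, ch, _, hcount⟩ := h
  rw [hcount v]
  exact Int.natCast_nonneg _

lemma BreakR.le_card {R : Finset G.E} {D : G.V → ℤ} (h : G.BreakR R D) (v : G.V) :
    D v ≤ R.card := by
  obtain ⟨T, _, ch, _, hcount⟩ := h
  rw [hcount v]
  exact_mod_cast Finset.card_le_card (Finset.filter_subset _ _)

instance finite_breakR (R : Finset G.E) : Finite {D : G.V → ℤ // G.BreakR R D} := by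
  apply Finite.of_injective
    (fun (D : {D : G.V → ℤ // G.BreakR R D}) (v : G.V) =>
      (⟨(D.val v).toNat, by
        have h1 := D.2.le_card v
        have h2 := D.2.nonneg v
        omega⟩ : Fin (R.card + 1)))
  intro D D' h
  apply Subtype.ext
  funext v
  have h1 : (D.val v).toNat = (D'.val v).toNat := by
    have := congrFun h v
    exact congrArg Fin.val this
  have h2 := D.2.nonneg v
  have h3 := D'.2.nonneg v
  omega

section Split

variable {e : G.E}

lemma subtype_insert_map (Tb : Finset {f : G.E // f ≠ e}) :
    (insert e (Tb.map (Function.Embedding.subtype _))).subtype (· ≠ e) = Tb := by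
  ext fb
  rw [Finset.mem_subtype, Finset.mem_insert, Finset.mem_map]
  constructor
  · rintro (h | ⟨gb, hgb, hval⟩)
    · exact absurd h fb.2
    · rwa [← show gb = fb from Subtype.ext hval]
  · intro h
    exact Or.inr ⟨fb, h, rfl⟩

lemma insert_map_subtype {T : Finset G.E} (heT : e ∈ T) :
    insert e ((T.subtype (· ≠ e)).map (Function.Embedding.subtype _)) = T := by
  ext f
  rw [Finset.mem_insert, Finset.mem_map]
  constructor
  · rintro (rfl | ⟨gb, hgb, hval⟩)
    · exact heT
    · rw [Finset.mem_subtype] at hgb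
      rwa [← hval]
  · intro hf
    by_cases hfe : f = e
    · exact Or.inl hfe
    · exact Or.inr ⟨⟨f, hfe⟩, Finset.mem_subtype.mpr hf, rfl⟩

lemma trees_split (huv : (G.ends e).1 ≠ (G.ends e).2) {R : Finset G.E} (heR : e ∈ R) :
    Nat.card {T : Finset G.E // G.TreeR R T}
      = Nat.card {T : Finset G.E // G.TreeR (R.erase e) T}
        + Nat.card {Tb : Finset (G.contract e huv).E //
            (G.contract e huv).TreeR (R.subtype (· ≠ e)) Tb} := by
  classical
  rw [← Nat.card_sum]
  apply Nat.card_eq_of_bijective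
    (fun T => if heT : e ∈ T.val
      then Sum.inr ⟨T.val.subtype (· ≠ e), TreeR.contract_push T.2 heT⟩
      else Sum.inl ⟨T.val, by
        obtain ⟨hsub, hconn, hcard⟩ := T.2
        exact ⟨fun f hf => Finset.mem_erase.mpr ⟨fun h' => heT (h' ▸ hf), hsub hf⟩,
          hconn, hcard⟩⟩)
  constructor
  · intro T T' hTT
    simp only [] at hTT
    by_cases h1 : e ∈ T.val <;> by_cases h2 : e ∈ T'.val
    · rw [dif_pos h1, dif_pos h2] at hTT
      have h3 : T.val.subtype (· ≠ e) = T'.val.subtype (· ≠ e) :=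
        congrArg Subtype.val (Sum.inr_injective hTT)
      apply Subtype.ext
      rw [← insert_map_subtype h1, ← insert_map_subtype h2, h3]
    · rw [dif_pos h1, dif_neg h2] at hTT
      exact absurd hTT (by simp)
    · rw [dif_neg h1, dif_pos h2] at hTT
      exact absurd hTT (by simp)
    · rw [dif_neg h1, dif_neg h2] at hTT
      injection hTT with h3
      have h4 := congrArg (fun (x : {T : Finset G.E // G.TreeR (R.erase e) T}) => x.val) h3
      exact Subtype.ext h4
  · intro s
    rcases s with ⟨T', hT'⟩ | ⟨Tb, hTb⟩
    · have heT' : e ∉ T' := fun h' => (Finset.mem_erase.mp (hT'.1 h')).1 rfl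
      refine ⟨⟨T', ⟨hT'.1.trans (Finset.erase_subset _ _), hT'.2.1, hT'.2.2⟩⟩, ?_⟩
      simp only []
      rw [dif_neg heT']
    · refine ⟨⟨insert e (Tb.map (Function.Embedding.subtype _)),
        TreeR.contract_lift heR hTb⟩, ?_⟩
      simp only []
      rw [dif_pos (Finset.mem_insert_self e _)]
      congr 1
      exact Subtype.ext (subtype_insert_map Tb)

end Split

end Multigraph
namespace Multigraph

open Finset

variable {G : Multigraph}

section BSplit

variable {e : G.E}

lemma constr_del {R : Finset G.E} (heR : e ∈ R) {D₀ : G.V → ℤ} (hC : G.ConstrR R D₀)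
    (hu₀ : 1 ≤ D₀ (G.ends e).1)
    (hP₀ : ∀ A : Finset G.V, A.Nonempty → (G.ends e).1 ∈ A → (G.ends e).2 ∉ A →
      (G.mEdges R A : ℤ) - A.card + 1 ≤ (∑ x ∈ A, D₀ x) - 1) :
    G.ConstrR (R.erase e) (fun w => D₀ w - if w = (G.ends e).1 then 1 else 0) := by
  obtain ⟨hnn₀, hdeg₀, hineq₀⟩ := hC
  refine ⟨?_, ?_, ?_⟩
  · intro w
    by_cases hw : w = (G.ends e).1
    · subst hw; simp only [if_pos rfl]; omega
    · simp only [if_neg hw]; have := hnn₀ w; omega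
  · rw [sum_sub_delta Finset.univ D₀ (G.ends e).1,
      if_pos (Finset.mem_univ _), Finset.card_erase_of_mem heR]
    have hc : 1 ≤ R.card := Finset.card_pos.mpr ⟨e, heR⟩
    have h2 : ((R.card - 1 : ℕ) : ℤ) = (R.card : ℤ) - 1 := by push_cast [hc]; omega
    rw [hdeg₀, h2]
    ring
  · intro A hA
    have h2 := mEdges_erase heR A
    rw [sum_sub_delta A D₀ (G.ends e).1]
    by_cases huA : (G.ends e).1 ∈ A
    · rw [if_pos huA]
      by_cases hvA : (G.ends e).2 ∈ A
      · have h1 := hineq₀ A hA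
        rw [if_pos ⟨huA, hvA⟩] at h2
        have h2' : (G.mEdges R A : ℤ) = (G.mEdges (R.erase e) A : ℤ) + 1 := by
          exact_mod_cast h2
        omega
      · have h1 := hP₀ A hA huA hvA
        rw [if_neg (fun hcon => hvA hcon.2), Nat.add_zero] at h2
        rw [← h2]
        omega
    · rw [if_neg huA]
      have h1 := hineq₀ A hA
      rw [if_neg (fun hcon => huA hcon.1), Nat.add_zero] at h2
      rw [← h2]
      omega

variable {huv : (G.ends e).1 ≠ (G.ends e).2}

lemma constr_push {R : Finset G.E} (heR : e ∈ R) {D : G.V → ℤ} (hC : G.ConstrR R D) :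
    (G.contract e huv).ConstrR (R.subtype (· ≠ e)) (pushD G e huv D) := by
  obtain ⟨hnn, hdeg, hineq⟩ := hC
  refine ⟨?_, ?_, ?_⟩
  · intro xb
    unfold pushD
    have h1 := hnn xb.val
    have h2 := hnn (G.ends e).2
    split_ifs <;> omega
  · rw [sum_pushD_univ, hdeg]
    have h1 := card_subtype_ne (G := G) (e := e) heR
    have h2 := card_contract_V (G := G) (e := e) (huv := huv)
    push_cast [← h1, ← h2]
    ring
  · intro Ab hAb
    have h1 := hineq (liftA G e huv Ab) (liftA_nonempty hAb)
    rw [sum_liftA] at h1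
    have h2 := mEdges_contract (huv := huv) heR Ab
    have h3 := card_liftA (huv := huv) Ab
    by_cases hu : ubar G e huv ∈ Ab
    · rw [if_pos hu] at h2 h3
      have h2' : ((G.contract e huv).mEdges (R.subtype (· ≠ e)) Ab : ℤ) + 1
          = (G.mEdges R (liftA G e huv Ab) : ℤ) := by exact_mod_cast h2
      have h3' : ((liftA G e huv Ab).card : ℤ) = (Ab.card : ℤ) + 1 := by exact_mod_cast h3
      omega
    · rw [if_neg hu, Nat.add_zero] at h2 h3
      have h2' : ((G.contract e huv).mEdges (R.subtype (· ≠ e)) Ab : ℤ)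
          = (G.mEdges R (liftA G e huv Ab) : ℤ) := by exact_mod_cast h2
      have h3' : ((liftA G e huv Ab).card : ℤ) = (Ab.card : ℤ) := by exact_mod_cast h3
      omega

lemma pushD_eq_off {D₀ D : G.V → ℤ} (hp : pushD G e huv D₀ = pushD G e huv D) :
    ∀ x, x ≠ (G.ends e).1 → x ≠ (G.ends e).2 → D₀ x = D x := by
  intro x hxu hxv
  have h1 := congrFun hp ⟨x, hxv⟩
  have hnu : (⟨x, hxv⟩ : (G.contract e huv).V) ≠ ubar G e huv := by
    intro h'
    exact hxu (congrArg Subtype.val h')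
  simp only [pushD, if_neg hnu, add_zero] at h1
  exact h1

lemma pushD_eq_sum {D₀ D : G.V → ℤ} (hp : pushD G e huv D₀ = pushD G e huv D) :
    D₀ (G.ends e).1 + D₀ (G.ends e).2 = D (G.ends e).1 + D (G.ends e).2 := by
  have h1 := congrFun hp (ubar G e huv)
  simp only [pushD, if_pos rfl] at h1
  exact h1

lemma eq_of_pushD_eq {D₀ D : G.V → ℤ} (hp : pushD G e huv D₀ = pushD G e huv D)
    (hu : D₀ (G.ends e).1 = D (G.ends e).1) : D₀ = D := by
  funext x
  by_cases hxv : x = (G.ends e).2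
  · subst hxv
    have := pushD_eq_sum hp
    omega
  · by_cases hxu : x = (G.ends e).1
    · subst hxu; exact hu
    · exact pushD_eq_off hp x hxu hxv

lemma pushD_chip_move (D₁ : G.V → ℤ) :
    pushD G e huv (fun w => (D₁ w - if w = (G.ends e).1 then 1 else 0)
      + if w = (G.ends e).2 then 1 else 0) = pushD G e huv D₁ := by
  funext xb
  by_cases hx : xb = ubar G e huv
  · subst hx
    simp only [pushD, if_pos rfl]
    have h1 : (ubar G e huv).val = (G.ends e).1 := rfl
    rw [h1]
    simp only [if_pos rfl, if_neg huv, if_neg (Ne.symm huv), if_true]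
    ring
  · have hval1 : xb.val ≠ (G.ends e).1 := fun h' => hx (Subtype.ext h')
    have hval2 : xb.val ≠ (G.ends e).2 := xb.2
    simp only [pushD, if_neg hx, if_neg hval1, if_neg hval2]
    ring

/-- splitting of break divisors along deletion / contraction of `e` -/
lemma breaks_split {R : Finset G.E} (heR : e ∈ R) (hne : Nonempty G.V)
    (hconn : G.ConnR R) (hconn' : G.ConnR (R.erase e)) :
    Nat.card {D : G.V → ℤ // G.BreakR R D}
      = Nat.card {D : G.V → ℤ // G.BreakR (R.erase e) D}
        + Nat.card {Db : (G.contract e huv).V → ℤ //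
            (G.contract e huv).BreakR (R.subtype (· ≠ e)) Db} := by
  classical
  set P : (G.V → ℤ) → Prop := fun D => 1 ≤ D (G.ends e).1 ∧ ∀ A : Finset G.V, A.Nonempty →
    (G.ends e).1 ∈ A → (G.ends e).2 ∉ A →
    (G.mEdges R A : ℤ) - A.card + 1 ≤ (∑ x ∈ A, D x) - 1 with hPdef
  -- the deletion step
  have hstepdel : ∀ D₀ : G.V → ℤ, G.BreakR R D₀ → P D₀ →
      G.BreakR (R.erase e) (fun w => D₀ w - if w = (G.ends e).1 then 1 else 0) := by
    intro D₀ hB₀ hP₀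
    exact sufficiency (Fintype.card G.E + (R.erase e).card) G (R.erase e) _ le_rfl hne hconn'
      (constr_del heR (necessity (Fintype.card G.E + R.card) G R D₀ le_rfl hB₀) hP₀.1 hP₀.2)
  -- a break divisor strictly above another one in the fibre satisfies P
  have haux : ∀ D₁ D₂ : G.V → ℤ, G.BreakR R D₁ → G.BreakR R D₂ →
      pushD G e huv D₁ = pushD G e huv D₂ → D₁ (G.ends e).1 < D₂ (G.ends e).1 → P D₂ := by
    intro D₁ D₂ hB₁ hB₂ hp hlt
    obtain ⟨hnn₁, _, hineq₁⟩ := necessity (Fintype.card G.E + R.card) G R D₁ le_rfl hB₁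
    constructor
    · have := hnn₁ (G.ends e).1
      omega
    · intro A hA huA hvA
      have h1 := hineq₁ A hA
      have hdiff : ∑ x ∈ A, D₂ x - ∑ x ∈ A, D₁ x = D₂ (G.ends e).1 - D₁ (G.ends e).1 := by
        rw [← Finset.sum_sub_distrib]
        rw [Finset.sum_eq_single_of_mem (G.ends e).1 huA]
        intro b hbA hbu
        have hbv : b ≠ (G.ends e).2 := fun h' => hvA (h' ▸ hbA)
        rw [pushD_eq_off hp b hbu hbv]
        ring
      omega
  rw [← @Nat.card_sum _ _ _ (finite_breakR (G := G.contract e huv) _)]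
  apply Nat.card_eq_of_bijective
    (fun D => if hP : P D.val
      then Sum.inl ⟨fun w => D.val w - if w = (G.ends e).1 then 1 else 0,
        hstepdel D.val D.2 hP⟩
      else Sum.inr ⟨pushD G e huv D.val,
        sufficiency (Fintype.card (G.contract e huv).E + (R.subtype (· ≠ e)).card)
          (G.contract e huv) (R.subtype (· ≠ e)) _ le_rfl ⟨ubar G e huv⟩
          (hconn.contract_push)
          (constr_push heR (necessity (Fintype.card G.E + R.card) G R D.val le_rfl D.2))⟩)
  constructor
  · intro D D' h
    simp only [] at h
    by_cases h1 : P D.val <;> by_cases h2 : P D'.val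
    · rw [dif_pos h1, dif_pos h2] at h
      injection h with h3
      have h4 := congrArg (fun (x : {D : G.V → ℤ // G.BreakR (R.erase e) D}) => x.val) h3
      apply Subtype.ext
      funext w
      have h5 := congrFun h4 w
      simp only [] at h5
      omega
    · rw [dif_pos h1, dif_neg h2] at h
      exact absurd h (by simp)
    · rw [dif_neg h1, dif_pos h2] at h
      exact absurd h (by simp)
    · rw [dif_neg h1, dif_neg h2] at h
      injection h with h3
      have h4 := congrArg (fun (x : {Db : (G.contract e huv).V → ℤ //
        (G.contract e huv).BreakR (R.subtype (· ≠ e)) Db}) => x.val) h3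
      apply Subtype.ext
      have hle1 : ¬ D.val (G.ends e).1 < D'.val (G.ends e).1 :=
        fun hlt => h2 (haux D.val D'.val D.2 D'.2 h4 hlt)
      have hle2 : ¬ D'.val (G.ends e).1 < D.val (G.ends e).1 :=
        fun hlt => h1 (haux D'.val D.val D'.2 D.2 h4.symm hlt)
      exact eq_of_pushD_eq h4 (by omega)
  · rintro (⟨D', hD'⟩ | ⟨Db, hDb⟩)
    · have hB : G.BreakR R (fun w => D' w + if w = (G.ends e).1 then 1 else 0) :=
        BreakR.add_chip heR (Or.inl rfl) hD'
      have hP : P (fun w => D' w + if w = (G.ends e).1 then 1 else 0) := by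
        obtain ⟨hnn', _, hineq'⟩ :=
          necessity (Fintype.card G.E + (R.erase e).card) G (R.erase e) D' le_rfl hD'
        constructor
        · have := hnn' (G.ends e).1
          simp only [if_pos rfl, if_true]
          omega
        · intro A hA huA hvA
          rw [sum_add_delta A D' (G.ends e).1, if_pos huA]
          have h1 := hineq' A hA
          have h2 := mEdges_erase heR A
          rw [if_neg (fun hcon => hvA hcon.2), Nat.add_zero] at h2
          rw [h2]
          omega
      refine ⟨⟨fun w => D' w + if w = (G.ends e).1 then 1 else 0, hB⟩, ?_⟩
      simp only []
      rw [dif_pos hP]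
      congr 1
      apply Subtype.ext
      funext w
      simp only []
      ring
    · obtain ⟨D₀, hB₀, hp₀⟩ := BreakR.contract_lift heR hDb
      have hdesc : ∀ (k : ℕ) (D₁ : G.V → ℤ), G.BreakR R D₁ →
          pushD G e huv D₁ = Db → (D₁ (G.ends e).1).toNat ≤ k →
          ∃ D₂ : G.V → ℤ, G.BreakR R D₂ ∧ pushD G e huv D₂ = Db ∧ ¬ P D₂ := by
        intro k
        induction k with
        | zero =>
          intro D₁ hB₁ hp₁ hle
          have h0 := hB₁.nonneg (G.ends e).1
          refine ⟨D₁, hB₁, hp₁, ?_⟩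
          rw [hPdef]
          intro hcon
          have := hcon.1
          omega
        | succ k ihk =>
          intro D₁ hB₁ hp₁ hle
          by_cases hP₁ : P D₁
          · have hBdel := hstepdel D₁ hB₁ hP₁
            have hBup := BreakR.add_chip heR (Or.inr rfl) hBdel
            refine ihk _ hBup ?_ ?_
            · rw [pushD_chip_move (huv := huv) D₁]
              exact hp₁
            · simp only [if_true]
              rw [if_neg huv]
              have := hP₁.1
              omega
          · exact ⟨D₁, hB₁, hp₁, hP₁⟩
      obtain ⟨D₂, hB₂, hp₂, hnP₂⟩ := hdesc (D₀ (G.ends e).1).toNat D₀ hB₀ hp₀ le_rfl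
      refine ⟨⟨D₂, hB₂⟩, ?_⟩
      simp only []
      rw [dif_neg hnP₂]
      congr 1
      exact Subtype.ext hp₂

end BSplit

end Multigraph
namespace Multigraph

open Finset

variable {G : Multigraph}

lemma break_eq_zero_of_card {R : Finset G.E} (hcard : R.card + 1 = Fintype.card G.V)
    {D : G.V → ℤ} (hD : G.BreakR R D) : D = fun _ => 0 := by
  obtain ⟨T, ⟨hTsub, hTconn, hTcard⟩, ch, hch, hcount⟩ := hD
  have hTR : T = R := by
    apply Finset.eq_of_subset_of_card_le hTsub
    omega
  subst hTR
  funext w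
  rw [hcount w]
  have : T.filter (fun f => f ∉ T ∧ ch f = w) = ∅ := by
    apply Finset.filter_false_of_mem
    rintro f hf ⟨hnf, _⟩
    exact hnf hf
  rw [this]
  simp

lemma break_zero_of_card {R : Finset G.E} (hconn : G.ConnR R)
    (hcard : R.card + 1 = Fintype.card G.V) : G.BreakR R (fun _ => 0) := by
  refine ⟨R, ⟨Finset.Subset.refl R, hconn, hcard⟩, fun f => (G.ends f).1, ?_, ?_⟩
  · intro f hfR hfT
    exact absurd hfR hfT
  · intro w
    symm
    rw [Int.natCast_eq_zero, Finset.card_eq_zero]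
    apply Finset.filter_false_of_mem
    rintro f hf ⟨hnf, _⟩
    exact hnf hf

/-- The main counting lemma : number of break divisors = number of spanning trees. -/
lemma count_eq : ∀ (M : ℕ) (G : Multigraph) (R : Finset G.E),
    Fintype.card G.E + R.card ≤ M → Nonempty G.V → G.ConnR R →
    Nat.card {D : G.V → ℤ // G.BreakR R D}
      = Nat.card {T : Finset G.E // G.TreeR R T} := by
  intro M
  induction M using Nat.strong_induction_on with
  | _ M ih =>
  intro G R hM hne hconn
  classical
  by_cases hsmall : R.card + 1 ≤ Fintype.card G.V
  · by_cases hEq : R.card + 1 = Fintype.card G.V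
    · -- exactly one tree and one break divisor
      have h1 : Nat.card {D : G.V → ℤ // G.BreakR R D} = 1 := by
        rw [Nat.card_eq_one_iff_unique]
        constructor
        · constructor
          intro D D'
          apply Subtype.ext
          rw [break_eq_zero_of_card hEq D.2, break_eq_zero_of_card hEq D'.2]
        · exact ⟨⟨_, break_zero_of_card hconn hEq⟩⟩
      have h2 : Nat.card {T : Finset G.E // G.TreeR R T} = 1 := by
        rw [Nat.card_eq_one_iff_unique]
        constructor
        · constructor
          intro T T'
          apply Subtype.ext
          have e1 : T.val = R := by
            apply Finset.eq_of_subset_of_card_le T.2.1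
            have := T.2.2.2
            omega
          have e2 : T'.val = R := by
            apply Finset.eq_of_subset_of_card_le T'.2.1
            have := T'.2.2.2
            omega
          rw [e1, e2]
        · exact ⟨⟨R, Finset.Subset.refl R, hconn, hEq⟩⟩
      rw [h1, h2]
    · -- too few edges : both sides are empty
      have hlt : R.card + 1 < Fintype.card G.V := by omega
      have hT : IsEmpty {T : Finset G.E // G.TreeR R T} := by
        constructor
        rintro ⟨T, hTsub, _, hTcard⟩
        have := Finset.card_le_card hTsub
        omega
      have hD : IsEmpty {D : G.V → ℤ // G.BreakR R D} := by
        constructor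
        rintro ⟨D, T, ⟨hTsub, _, hTcard⟩, _⟩
        have := Finset.card_le_card hTsub
        omega
      rw [Nat.card_of_isEmpty, Nat.card_of_isEmpty]
  · by_cases hloop : ∃ l ∈ R, (G.ends l).1 = (G.ends l).2
    · -- loop reduction
      obtain ⟨l, hlR, hl⟩ := hloop
      have hbl : Nat.card {D : G.V → ℤ // G.BreakR R D}
          = Nat.card {D : G.V → ℤ // G.BreakR (R.erase l) D} := by
        apply Nat.card_eq_of_bijective (fun D =>
          ⟨fun w => D.val w - if w = (G.ends l).1 then 1 else 0, by
            obtain ⟨T, hT, ch, hch, hcount⟩ := D.2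
            have hlT : l ∉ T := TreeR.not_mem_of_loop hT hl
            have hchl : ch l = (G.ends l).1 := by
              rcases hch l hlR hlT with h' | h'
              · exact h'
              · rw [h', hl]
            have := BreakR.remove_chip hlR hT hlT hch hcount
            rwa [hchl] at this⟩)
        constructor
        · intro D D' h
          have h4 := congrArg (fun (x : {D : G.V → ℤ // G.BreakR (R.erase l) D}) => x.val) h
          apply Subtype.ext
          funext w
          have h5 := congrFun h4 w
          simp only [] at h5
          omega
        · rintro ⟨D', hD'⟩
          refine ⟨⟨fun w => D' w + if w = (G.ends l).1 then 1 else 0,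
            BreakR.add_chip hlR (Or.inl rfl) hD'⟩, ?_⟩
          apply Subtype.ext
          funext w
          simp only []
          ring
      have htl : Nat.card {T : Finset G.E // G.TreeR R T}
          = Nat.card {T : Finset G.E // G.TreeR (R.erase l) T} := by
        apply Nat.card_congr
        apply Equiv.subtypeEquivRight
        intro T
        constructor
        · intro hT
          have hlT : l ∉ T := TreeR.not_mem_of_loop hT hl
          exact ⟨fun f hf => Finset.mem_erase.mpr ⟨fun h' => hlT (h' ▸ hf), hT.1 hf⟩,
            hT.2.1, hT.2.2⟩
        · intro hT
          exact ⟨hT.1.trans (Finset.erase_subset _ _), hT.2.1, hT.2.2⟩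
      rw [hbl, htl]
      apply ih (Fintype.card G.E + (R.erase l).card)
      · rw [Finset.card_erase_of_mem hlR]
        have : 1 ≤ R.card := Finset.card_pos.mpr ⟨l, hlR⟩
        omega
      · exact le_rfl
      · exact hne
      · exact hconn.erase_loop' hl
    · -- main case
      push_neg at hloop
      obtain ⟨T₀, hT₀⟩ := tree_exists (Fintype.card G.E) G le_rfl hne R hconn
      have hex : ∃ e ∈ R, e ∉ T₀ := by
        by_contra hcon
        push_neg at hcon
        have := Finset.card_le_card (fun f hf => hcon f hf)
        have := hT₀.2.2
        omega
      obtain ⟨e, heR, heT₀⟩ := hex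
      have huv : (G.ends e).1 ≠ (G.ends e).2 := hloop e heR
      have hconn' : G.ConnR (R.erase e) := ConnR.of_tree_erase hT₀ heT₀
      have hEc := card_contract_E (G := G) (e := e) (huv := huv)
      have hRc := card_subtype_ne (G := G) (e := e) heR
      have hcR : 1 ≤ R.card := Finset.card_pos.mpr ⟨e, heR⟩
      rw [breaks_split (huv := huv) heR hne hconn hconn', trees_split huv heR]
      have ih1 := ih (Fintype.card G.E + (R.erase e).card)
        (by rw [Finset.card_erase_of_mem heR]; omega)
        G (R.erase e) le_rfl hne hconn'
      have ih2 := ih (Fintype.card (G.contract e huv).E + (R.subtype (· ≠ e)).card)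
        (by omega)
        (G.contract e huv) (R.subtype (· ≠ e)) le_rfl ⟨ubar G e huv⟩ (hconn.contract_push)
      omega

end Multigraph

namespace Multigraph

/-- the number of break divisors equals the number of
spanning trees. -/
theorem card_break_eq_card_spanning_trees (G : Multigraph) (hG : G.Connected)
    (hl : G.Loopless) :
    Nat.card {D : G.V → ℤ // G.IsBreak D} =
      Nat.card {T : Finset G.E // G.IsSpanningTree T} := by
  have hconn : G.ConnR Finset.univ := connR_univ hG
  have hne : Nonempty G.V := hG.1
  have hmain := count_eq (Fintype.card G.E + Finset.univ.card) G Finset.univ le_rfl hne hconn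
  have h1 : Nat.card {D : G.V → ℤ // G.IsBreak D}
      = Nat.card {D : G.V → ℤ // G.BreakR Finset.univ D} := by
    apply Nat.card_congr
    apply Equiv.subtypeEquivRight
    intro D
    constructor
    · rintro ⟨T, hT, ch, hch, hcount⟩
      exact ⟨T, ⟨Finset.subset_univ T, hT.1, hT.2⟩, ch,
        fun f _ hfT => hch f hfT, hcount⟩
    · rintro ⟨T, hT, ch, hch, hcount⟩
      exact ⟨T, ⟨hT.2.1, hT.2.2⟩, ch, fun f hfT => hch f (Finset.mem_univ f) hfT, hcount⟩
  have h2 : Nat.card {T : Finset G.E // G.IsSpanningTree T}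
      = Nat.card {T : Finset G.E // G.TreeR Finset.univ T} := by
    apply Nat.card_congr
    apply Equiv.subtypeEquivRight
    intro T
    constructor
    · intro hT
      exact ⟨Finset.subset_univ T, hT.1, hT.2⟩
    · intro hT
      exact ⟨hT.2.1, hT.2.2⟩
  rw [h1, h2, hmain]

end Multigraph
end

section
/- Let G be a connected ribbon graph with initial data (v,e), a vertex v and incident edge e. For every spanning tree T, the Bernardi tour τ_{(v,e)}(T) traverses each edge of T exactly twice (once in each direction) and cuts through each edge not in T exactly twice, and the associated divisor β_{(v,e)}(T) is a T-break divisor. -/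
namespace Multigraph

variable (G : Multigraph)

/-- A dart (half-edge / directed edge): an edge with a direction. -/
abbrev Dart := G.E × Bool

/-- The tail (initial vertex) of a dart. -/
def dtail (d : G.Dart) : G.V := if d.2 then (G.ends d.1).1 else (G.ends d.1).2

/-- The head (terminal vertex) of a dart. -/
def dhead (d : G.Dart) : G.V := if d.2 then (G.ends d.1).2 else (G.ends d.1).1

/-- Reversing a dart. -/
def flipPerm : Equiv.Perm G.Dart :=
  Function.Involutive.toPerm (fun d => (d.1, !d.2)) (by intro d; simp)

end Multigraph

/-- A ribbon graph: a multigraph together with a cyclic ordering of the darts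
around each vertex, encoded as a permutation `next` of the darts whose cycles
are exactly the fibers of the tail map. -/
structure RibbonGraph extends Multigraph where
  next : Equiv.Perm (E × Bool)
  cyclic : ∀ d d' : E × Bool,
    toMultigraph.dtail d = toMultigraph.dtail d' ↔ next.SameCycle d d'

namespace RibbonGraph

variable (R : RibbonGraph)

/-- One step of the Bernardi tour with respect to a spanning tree `T`:
walk along tree edges, cut through non-tree edges. -/
def bernardiStep (T : Finset R.toMultigraph.E) (d : R.toMultigraph.Dart) :
    R.toMultigraph.Dart :=
  if d.1 ∈ T then R.next (R.toMultigraph.flipPerm d) else R.next d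

/-- The Bernardi tour: the sequence of darts considered by the Bernardi
process started at the dart `d0`. -/
def bernardiTour (T : Finset R.toMultigraph.E) (d0 : R.toMultigraph.Dart)
    (n : ℕ) : R.toMultigraph.Dart :=
  (R.bernardiStep T)^[n] d0

open scoped Classical in
/-- The Bernardi divisor `β_{(v,e)}(T)`: a chip is dropped at the current
vertex each time the tour first cuts through an edge not in `T`. -/
noncomputable def bernardiDiv (T : Finset R.toMultigraph.E)
    (d0 : R.toMultigraph.Dart) : R.toMultigraph.V → ℤ := fun v =>
  ((Finset.univ.filter (fun e : R.toMultigraph.E => e ∉ T ∧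
      ∃ i : ℕ, (R.bernardiTour T d0 i).1 = e ∧
        R.toMultigraph.dtail (R.bernardiTour T d0 i) = v ∧
        ∀ j < i, (R.bernardiTour T d0 j).1 ≠ e)).card : ℤ)

/-- The face permutation of a ribbon graph. -/
def facePerm : Equiv.Perm (R.toMultigraph.Dart) := R.next * R.toMultigraph.flipPerm

/-- Darts belonging to the same face. -/
def faceSetoid : Setoid (R.toMultigraph.Dart) :=
  ⟨R.facePerm.SameCycle,
    ⟨fun _ => Equiv.Perm.SameCycle.refl _ _, fun h => h.symm, fun h h' => h.trans h'⟩⟩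

/-- The number of faces of a ribbon graph. -/
noncomputable def numFaces : ℕ := Nat.card (Quotient R.faceSetoid)

/-- A ribbon graph is planar iff Euler's formula `#V - #E + #F = 2` holds,
i.e. its topological genus is zero. -/
def Planar : Prop :=
  (Fintype.card R.toMultigraph.V : ℤ) - Fintype.card R.toMultigraph.E + R.numFaces = 2

end RibbonGraph

namespace Multigraph

variable {G : Multigraph}

lemma connectsVia_symm {S : Finset G.E} {x y : G.V} (h : G.ConnectsVia S x y) :
    G.ConnectsVia S y x :=
  (@Relation.ReflTransGen.stdSymm _ (fun a b => ∃ e ∈ S, G.ends e = (a, b) ∨ G.ends e = (b, a))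
    ⟨fun _ _ ⟨e, he, h⟩ => ⟨e, he, h.symm⟩⟩).symm _ _ h

lemma connectsVia_mono {S S' : Finset G.E} (hss : S ⊆ S') {x y : G.V}
    (h : G.ConnectsVia S x y) : G.ConnectsVia S' x y :=
  Relation.ReflTransGen.mono (p := fun a b => ∃ e ∈ S', G.ends e = (a, b) ∨ G.ends e = (b, a))
    (r := fun a b => ∃ e ∈ S, G.ends e = (a, b) ∨ G.ends e = (b, a))
    (fun _ _ ⟨e, he, h⟩ => ⟨e, hss he, h⟩) _ _ h

lemma connectsVia_insert {S : Finset G.E} {e : G.E} {x y : G.V}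
    (h : G.ConnectsVia (insert e S) x y) :
    G.ConnectsVia S x y ∨ G.ConnectsVia S x (G.ends e).1 ∨ G.ConnectsVia S x (G.ends e).2 := by
  induction h using Relation.ReflTransGen.head_induction_on with
  | refl => exact Or.inl .refl
  | head hab _ ih =>
    obtain ⟨f, hf, hends⟩ := hab
    rcases Finset.mem_insert.mp hf with rfl | hfS
    · rcases hends with h1 | h1
      · exact Or.inr (Or.inl (by rw [h1]; exact .refl))
      · exact Or.inr (Or.inr (by rw [h1]; exact .refl))
    · rcases ih with h2 | h2 | h2
      · exact Or.inl (Relation.ReflTransGen.head ⟨f, hfS, hends⟩ h2)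
      · exact Or.inr (Or.inl (Relation.ReflTransGen.head ⟨f, hfS, hends⟩ h2))
      · exact Or.inr (Or.inr (Relation.ReflTransGen.head ⟨f, hfS, hends⟩ h2))

lemma connectsVia_insert_of_connects {S : Finset G.E} {e : G.E}
    (he : G.ConnectsVia S (G.ends e).1 (G.ends e).2)
    {x y : G.V} (h : G.ConnectsVia (insert e S) x y) : G.ConnectsVia S x y := by
  induction h with
  | refl => exact .refl
  | tail _ hbc ih =>
    obtain ⟨f, hf, hends⟩ := hbc
    rcases Finset.mem_insert.mp hf with rfl | hfS
    · rcases hends with h1 | h1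
      · exact ih.trans (by rw [h1] at he; exact he)
      · exact ih.trans (by rw [h1] at he; exact connectsVia_symm he)
    · exact ih.tail ⟨f, hfS, hends⟩

/-- The setoid of `S`-connectivity. -/
def connSetoid (S : Finset G.E) : Setoid G.V :=
  ⟨fun x y => G.ConnectsVia S x y,
    ⟨fun _ => .refl, connectsVia_symm, fun h h' => h.trans h'⟩⟩

noncomputable def ncomp (G : Multigraph) (S : Finset G.E) : ℕ :=
  Nat.card (Quotient (connSetoid (G := G) S))

lemma ncomp_empty : G.ncomp ∅ = Fintype.card G.V := by
  have hinj : Function.Injective (Quotient.mk (connSetoid (G := G) ∅)) := by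
    intro a b hab
    have : G.ConnectsVia ∅ a b := Quotient.exact hab
    induction this with
    | refl => rfl
    | tail _ hbc => obtain ⟨f, hf, _⟩ := hbc; exact absurd hf (Finset.notMem_empty f)
  have hsurj : Function.Surjective (Quotient.mk (connSetoid (G := G) ∅)) :=
    Quotient.exists_rep
  rw [ncomp]
  exact ((Nat.card_eq_of_bijective _ ⟨hinj, hsurj⟩).symm.trans Nat.card_eq_fintype_card)

lemma ncomp_insert_le (e : G.E) (S : Finset G.E) :
    G.ncomp S ≤ G.ncomp (insert e S) + 1 := by
  classical
  have hmono : ∀ a b : G.V, (connSetoid (G := G) S).r a b →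
      (connSetoid (G := G) (insert e S)).r a b :=
    fun a b h => connectsVia_mono (Finset.subset_insert e S) h
  set sS := connSetoid (G := G) S
  set s' := connSetoid (G := G) (insert e S)
  let q : Quotient sS → Quotient s' := Quotient.map id hmono
  let j : Quotient sS → Quotient s' ⊕ Unit :=
    fun a => if a = Quotient.mk sS (G.ends e).1 then Sum.inr () else Sum.inl (q a)
  have hj : Function.Injective j := by
    intro a b hab
    simp only [j] at hab
    beta_reduce at hab
    split_ifs at hab with ha hb hb
    · exact ha.trans hb.symm
    · have hq : q a = q b := Sum.inl.inj hab
      induction a using Quotient.inductionOn with | h u => ?_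
      induction b using Quotient.inductionOn with | h v => ?_
      have huv : G.ConnectsVia (insert e S) u v := Quotient.exact hq
      by_contra hne
      have hnS : ¬ G.ConnectsVia S u v := fun h => hne (Quotient.sound h)
      have h1 := connectsVia_insert huv
      have h2 := connectsVia_insert (connectsVia_symm huv)
      rcases h1 with h1 | h1 | h1
      · exact hnS h1
      · exact ha (Quotient.sound h1)
      · rcases h2 with h2 | h2 | h2
        · exact hnS (connectsVia_symm h2)
        · exact hb (Quotient.sound h2)
        · exact hnS (h1.trans (connectsVia_symm h2))
  calc G.ncomp S ≤ Nat.card (Quotient s' ⊕ Unit) :=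
        Nat.card_le_card_of_injective j hj
    _ = G.ncomp (insert e S) + 1 := by rw [Nat.card_sum]; simp [ncomp, s']

lemma card_le_ncomp_add_card (S : Finset G.E) :
    Fintype.card G.V ≤ G.ncomp S + S.card := by
  classical
  induction S using Finset.induction_on with
  | empty => simp [ncomp_empty]
  | @insert e S he ih =>
    calc Fintype.card G.V ≤ G.ncomp S + S.card := ih
      _ ≤ G.ncomp (insert e S) + 1 + S.card := by
          have := ncomp_insert_le (G := G) e S; omega
      _ = G.ncomp (insert e S) + (insert e S).card := by
          rw [Finset.card_insert_of_notMem he]; ring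

lemma card_le_of_connects (S : Finset G.E) [Nonempty G.V]
    (h : ∀ x y : G.V, G.ConnectsVia S x y) :
    Fintype.card G.V ≤ S.card + 1 := by
  have h1 : G.ncomp S = 1 := by
    rw [ncomp, Nat.card_eq_one_iff_unique]
    constructor
    · constructor
      intro a b
      induction a using Quotient.inductionOn with | h u =>
      induction b using Quotient.inductionOn with | h v =>
      exact Quotient.sound (h u v)
    · exact Nonempty.map (Quotient.mk _) ‹Nonempty G.V›
  have h2 := card_le_ncomp_add_card (G := G) S
  omega

lemma tree_erase_disconnects {T : Finset G.E} (hT : G.IsSpanningTree T)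
    {e : G.E} (he : e ∈ T) :
    ¬ G.ConnectsVia (T.erase e) (G.ends e).1 (G.ends e).2 := by
  intro h
  have hT2 := hT.2
  have hne : Nonempty G.V := by
    rw [← Fintype.card_pos_iff]; omega
  have hall : ∀ x y : G.V, G.ConnectsVia (T.erase e) x y := by
    intro x y
    refine connectsVia_insert_of_connects h ?_
    refine connectsVia_mono ?_ (hT.1 x y)
    intro f hf
    by_cases hfe : f = e
    · simp [hfe]
    · exact Finset.mem_insert_of_mem (Finset.mem_erase.mpr ⟨hfe, hf⟩)
  have hc := card_le_of_connects (G := G) (T.erase e) hall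
  have hcard : (T.erase e).card = T.card - 1 := Finset.card_erase_of_mem he
  have hTpos : 0 < T.card := Finset.card_pos.mpr ⟨e, he⟩
  omega


lemma dtail_or {G : Multigraph} (d : G.Dart) :
    G.dtail d = (G.ends d.1).1 ∨ G.dtail d = (G.ends d.1).2 := by
  obtain ⟨e, b⟩ := d; cases b <;> simp [dtail]

lemma dtail_not {G : Multigraph} (d : G.Dart) :
    G.dtail (d.1, !d.2) = G.dhead d := by
  obtain ⟨e, b⟩ := d; cases b <;> simp [dtail, dhead]

lemma dhead_not {G : Multigraph} (d : G.Dart) :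
    G.dhead (d.1, !d.2) = G.dtail d := by
  obtain ⟨e, b⟩ := d; cases b <;> simp [dtail, dhead]

lemma flipPerm_apply {G : Multigraph} (d : G.Dart) : G.flipPerm d = (d.1, !d.2) := rfl

end Multigraph

namespace RibbonGraph

/-- The tree-dependent involution: flip tree darts, fix non-tree darts. -/
def treeFlip (R : RibbonGraph) (T : Finset R.toMultigraph.E) :
    Equiv.Perm (R.toMultigraph.Dart) :=
  Function.Involutive.toPerm (fun d => if d.1 ∈ T then (d.1, !d.2) else d)
    (by intro ⟨e, b⟩; by_cases h : e ∈ T <;> simp [h])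

/-- The Bernardi step as a permutation. -/
def stepPerm (R : RibbonGraph) (T : Finset R.toMultigraph.E) :
    Equiv.Perm (R.toMultigraph.Dart) :=
  R.next * R.treeFlip T

lemma bernardiStep_eq (R : RibbonGraph) (T : Finset R.toMultigraph.E) :
    R.bernardiStep T = ⇑(R.stepPerm T) := by
  funext d
  simp only [bernardiStep, stepPerm, treeFlip, Equiv.Perm.coe_mul, Function.comp_apply,
    Function.Involutive.coe_toPerm, Multigraph.flipPerm_apply]
  split_ifs with h <;> simp [h, Function.Involutive.toPerm]

lemma dtail_next (R : RibbonGraph) (d : R.toMultigraph.Dart) :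
    R.toMultigraph.dtail (R.next d) = R.toMultigraph.dtail d :=
  ((R.cyclic d (R.next d)).mpr ⟨1, by simp⟩).symm

lemma dtail_step (R : RibbonGraph) (T : Finset R.toMultigraph.E) (d : R.toMultigraph.Dart) :
    R.toMultigraph.dtail (R.bernardiStep T d) =
      if d.1 ∈ T then R.toMultigraph.dhead d else R.toMultigraph.dtail d := by
  unfold bernardiStep
  split_ifs with h
  · rw [dtail_next, Multigraph.flipPerm_apply, Multigraph.dtail_not]
  · rw [dtail_next]

lemma exists_iterate_flip (R : RibbonGraph) {T : Finset R.toMultigraph.E}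
    (hT : R.toMultigraph.IsSpanningTree T) (d0 : R.toMultigraph.Dart)
    {e : R.toMultigraph.E} (he : e ∈ T) {b : Bool}
    (hex : ∃ i : ℕ, (R.bernardiStep T)^[i] d0 = (e, b)) :
    ∃ j : ℕ, (R.bernardiStep T)^[j] d0 = (e, !b) := by
  classical
  have hdis := Multigraph.tree_erase_disconnects hT he
  set p := R.bernardiStep T with hpdef
  -- the step function is periodic at d0
  have hper0 : p^[orderOf (R.stepPerm T)] d0 = d0 := by
    rw [hpdef, bernardiStep_eq, Equiv.Perm.iterate_eq_pow, pow_orderOf_eq_one]; rfl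
  have hmem : d0 ∈ Function.periodicPts p :=
    ⟨orderOf (R.stepPerm T), orderOf_pos _, hper0⟩
  set m := Function.minimalPeriod p d0 with hmdef
  have hm : 0 < m := Function.minimalPeriod_pos_of_mem_periodicPts hmem
  have hmper : p^[m] d0 = d0 := Function.isPeriodicPt_minimalPeriod p d0
  -- the indicator of the component of the first endpoint of e in T.erase e
  set χ : R.toMultigraph.V → ℤ := fun u => if R.toMultigraph.ConnectsVia (T.erase e) u (R.toMultigraph.ends e).1 then 1 else 0
    with hχdef
  have hχ_congr : ∀ u w, R.toMultigraph.ConnectsVia (T.erase e) u w → χ u = χ w := by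
    intro u w h
    simp only [hχdef]
    exact if_congr ⟨fun h1 => (Multigraph.connectsVia_symm h).trans h1,
      fun h1 => h.trans h1⟩ rfl rfl
  have hχ1 : χ (R.toMultigraph.ends e).1 = 1 := by
    simp only [hχdef]
    exact if_pos Relation.ReflTransGen.refl
  have hχ2 : χ (R.toMultigraph.ends e).2 = 0 := by
    simp only [hχdef]
    exact if_neg (fun h => hdis (Multigraph.connectsVia_symm h))
  -- the change of χ across one Bernardi step
  have key : ∀ x : R.toMultigraph.Dart, χ (R.toMultigraph.dtail (p x)) - χ (R.toMultigraph.dtail x) =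
      (if x = (e, false) then 1 else 0) - (if x = (e, true) then 1 else 0) := by
    intro x
    rw [hpdef, dtail_step]
    by_cases hxT : x.1 ∈ T
    · rw [if_pos hxT]
      by_cases hxe : x.1 = e
      · obtain ⟨e', bb⟩ := x
        simp only at hxe
        subst hxe
        cases bb <;>
          simp [Multigraph.dtail, Multigraph.dhead, hχ1, hχ2]
      · have hstep : R.toMultigraph.ConnectsVia (T.erase e) (R.toMultigraph.dtail x) (R.toMultigraph.dhead x) := by
          refine Relation.ReflTransGen.single ⟨x.1, Finset.mem_erase.mpr ⟨hxe, hxT⟩, ?_⟩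
          obtain ⟨e', bb⟩ := x
          cases bb
          · right; simp [Multigraph.dtail, Multigraph.dhead]
          · left; simp [Multigraph.dtail, Multigraph.dhead]
        rw [hχ_congr _ _ hstep, sub_self,
          if_neg (fun h => hxe (by rw [h])), if_neg (fun h => hxe (by rw [h])), sub_self]
    · rw [if_neg hxT, sub_self,
        if_neg (fun h => hxT (by rw [h]; exact he)), if_neg (fun h => hxT (by rw [h]; exact he)),
        sub_self]
  -- telescoping over one full period
  have tele : ∑ i ∈ Finset.range m, (χ (R.toMultigraph.dtail (p^[i + 1] d0)) - χ (R.toMultigraph.dtail (p^[i] d0))) = 0 := by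
    rw [Finset.sum_range_sub (fun i => χ (R.toMultigraph.dtail (p^[i] d0))), hmper]
    exact sub_self _
  have tele2 : (∑ i ∈ Finset.range m, if p^[i] d0 = (e, false) then (1 : ℤ) else 0) =
      ∑ i ∈ Finset.range m, if p^[i] d0 = (e, true) then (1 : ℤ) else 0 := by
    have tele' := (Finset.sum_congr rfl (fun i (_ : i ∈ Finset.range m) => by
      rw [Function.iterate_succ_apply', key (p^[i] d0)])).symm.trans tele
    rw [← sub_eq_zero, ← Finset.sum_sub_distrib]
    exact tele'
  have cnt : ∀ c : Bool, (∑ i ∈ Finset.range m, if p^[i] d0 = (e, c) then (1 : ℤ) else 0) =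
      ∑ i ∈ Finset.range m, if p^[i] d0 = (e, !c) then (1 : ℤ) else 0 := by
    intro c; cases c
    · exact tele2.trans rfl
    · exact tele2.symm.trans rfl
  obtain ⟨i, hi⟩ := hex
  have hi' : p^[i % m] d0 = (e, b) := by
    rw [Function.iterate_mod_minimalPeriod_eq, hi]
  have hpos : (0 : ℤ) < ∑ i ∈ Finset.range m, if p^[i] d0 = (e, b) then (1 : ℤ) else 0 := by
    refine Finset.sum_pos' (fun j _ => by positivity) ⟨i % m, Finset.mem_range.mpr (Nat.mod_lt _ hm), ?_⟩
    rw [hi']; simp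
  rw [cnt b] at hpos
  obtain ⟨j, -, hj⟩ := Finset.exists_ne_zero_of_sum_ne_zero hpos.ne'
  refine ⟨j, ?_⟩
  by_contra hc
  exact hj (if_neg hc)

lemma sameCycle_next (R : RibbonGraph) {T : Finset R.toMultigraph.E}
    (hT : R.toMultigraph.IsSpanningTree T) {d0 d : R.toMultigraph.Dart}
    (h : (R.stepPerm T).SameCycle d0 d) : (R.stepPerm T).SameCycle d0 (R.next d) := by
  have hstep : ∀ x : R.toMultigraph.Dart, (R.stepPerm T).SameCycle x (R.stepPerm T x) :=
    fun x => ⟨1, by simp⟩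
  by_cases hd : d.1 ∈ T
  · -- flip d is in the same cycle, and stepping from flip d gives next d
    have h2 : (R.stepPerm T).SameCycle d0 (d.1, !d.2) := by
      obtain ⟨i, -, hi⟩ := h.exists_pow_eq'
      have hit : (R.bernardiStep T)^[i] d0 = (d.1, d.2) := by
        rw [bernardiStep_eq, Equiv.Perm.iterate_eq_pow, hi]
      obtain ⟨j, hj⟩ := R.exists_iterate_flip hT d0 hd ⟨i, hit⟩
      exact ⟨(j : ℤ), by
        rw [zpow_natCast, ← Equiv.Perm.iterate_eq_pow, ← bernardiStep_eq]; exact hj⟩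
    have h3 : R.stepPerm T (d.1, !d.2) = R.next d := by
      rw [← bernardiStep_eq]
      unfold bernardiStep
      rw [if_pos hd, Multigraph.flipPerm_apply]
      simp
    exact h2.trans (h3 ▸ hstep (d.1, !d.2))
  · have h3 : R.stepPerm T d = R.next d := by
      rw [← bernardiStep_eq]; unfold bernardiStep; rw [if_neg hd]
    exact h.trans (h3 ▸ hstep d)

lemma sameCycle_of_dtail_eq (R : RibbonGraph) {T : Finset R.toMultigraph.E}
    (hT : R.toMultigraph.IsSpanningTree T) {d0 g d : R.toMultigraph.Dart}
    (h : (R.stepPerm T).SameCycle d0 g)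
    (ht : R.toMultigraph.dtail d = R.toMultigraph.dtail g) :
    (R.stepPerm T).SameCycle d0 d := by
  have hsc : R.next.SameCycle g d := (R.cyclic g d).mp ht.symm
  obtain ⟨k, -, hk⟩ := hsc.exists_pow_eq'
  have : ∀ k : ℕ, (R.stepPerm T).SameCycle d0 ((R.next ^ k) g) := by
    intro k
    induction k with
    | zero => simpa using h
    | succ n ih =>
      rw [pow_succ', Equiv.Perm.mul_apply]
      exact R.sameCycle_next hT ih
  rw [← hk]
  exact this k

lemma sameCycle_all (R : RibbonGraph) {T : Finset R.toMultigraph.E}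
    (hT : R.toMultigraph.IsSpanningTree T) (d0 d : R.toMultigraph.Dart) :
    (R.stepPerm T).SameCycle d0 d := by
  have hflip : ∀ (e : R.toMultigraph.E), e ∈ T → ∀ b : Bool,
      (R.stepPerm T).SameCycle d0 (e, b) → (R.stepPerm T).SameCycle d0 (e, !b) := by
    intro e he b hsc
    obtain ⟨i, -, hi⟩ := hsc.exists_pow_eq'
    have hit : (R.bernardiStep T)^[i] d0 = (e, b) := by
      rw [bernardiStep_eq, Equiv.Perm.iterate_eq_pow, hi]
    obtain ⟨j, hj⟩ := R.exists_iterate_flip hT d0 he ⟨i, hit⟩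
    exact ⟨(j : ℤ), by
      rw [zpow_natCast, ← Equiv.Perm.iterate_eq_pow, ← bernardiStep_eq]; exact hj⟩
  have reach : ∀ u : R.toMultigraph.V,
      R.toMultigraph.ConnectsVia T (R.toMultigraph.dtail d0) u →
      ∃ g, (R.stepPerm T).SameCycle d0 g ∧ R.toMultigraph.dtail g = u := by
    intro u h
    induction h with
    | refl => exact ⟨d0, Equiv.Perm.SameCycle.refl _ _, rfl⟩
    | tail _ hbc ih =>
      obtain ⟨g, hg, hgt⟩ := ih
      obtain ⟨f, hfT, hends⟩ := hbc
      rcases hends with h1 | h1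
      · have ht : R.toMultigraph.dtail (f, true) = R.toMultigraph.dtail g := by
          rw [hgt]
          simp [Multigraph.dtail, h1]
        have h2 := R.sameCycle_of_dtail_eq hT hg ht
        have h3 := hflip f hfT true h2
        exact ⟨(f, false), h3, by simp [Multigraph.dtail, h1]⟩
      · have ht : R.toMultigraph.dtail (f, false) = R.toMultigraph.dtail g := by
          rw [hgt]
          simp [Multigraph.dtail, h1]
        have h2 := R.sameCycle_of_dtail_eq hT hg ht
        have h3 := hflip f hfT false h2
        exact ⟨(f, true), h3, by simp [Multigraph.dtail, h1]⟩
  obtain ⟨g, hg, hgt⟩ := reach (R.toMultigraph.dtail d) (hT.1 _ _)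
  exact R.sameCycle_of_dtail_eq hT hg hgt.symm

end RibbonGraph


namespace RibbonGraph

/-- for any spanning tree `T` and initial dart `d0` (at the vertex
`v`, along the edge `e`), the Bernardi tour hits every dart exactly once in its
first `2·#E` steps — i.e. it traverses each tree edge exactly twice (once in
each direction) and cuts through each non-tree edge exactly twice — and the
associated divisor `β_{(v,e)}(T)` is a `T`-break divisor. -/
theorem bernardi_tour_covers_and_tbreak (R : RibbonGraph)
    (hG : R.toMultigraph.Connected) (hl : R.toMultigraph.Loopless)
    (T : Finset R.toMultigraph.E) (hT : R.toMultigraph.IsSpanningTree T)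
    (d0 : R.toMultigraph.Dart) :
    (∀ d : R.toMultigraph.Dart,
      ∃! i : Fin (2 * Fintype.card R.toMultigraph.E),
        R.bernardiTour T d0 i = d) ∧
    R.toMultigraph.IsTBreak T (R.bernardiDiv T d0) := by
  classical
  set p := R.bernardiStep T with hpdef
  have hall : ∀ d : R.toMultigraph.Dart, (R.stepPerm T).SameCycle d0 d := fun d => R.sameCycle_all hT d0 d
  set N := 2 * Fintype.card R.toMultigraph.E with hNdef
  have hcard : Fintype.card R.toMultigraph.Dart = N := by
    simp only [Multigraph.Dart, Fintype.card_prod, Fintype.card_bool, hNdef]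
    ring
  -- periodicity setup
  have hper0 : p^[orderOf (R.stepPerm T)] d0 = d0 := by
    rw [hpdef, RibbonGraph.bernardiStep_eq, Equiv.Perm.iterate_eq_pow, pow_orderOf_eq_one]; rfl
  have hmem : d0 ∈ Function.periodicPts p := ⟨orderOf (R.stepPerm T), orderOf_pos _, hper0⟩
  set m := Function.minimalPeriod p d0 with hmdef
  have hm : 0 < m := Function.minimalPeriod_pos_of_mem_periodicPts hmem
  have hinj_m : Function.Injective (fun i : Fin m => p^[(i : ℕ)] d0) := by
    intro i j hij
    exact Fin.ext (Function.iterate_injOn_Iio_minimalPeriod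
      (Set.mem_Iio.mpr i.2) (Set.mem_Iio.mpr j.2) hij)
  have hmN : m ≤ N := by
    have := Fintype.card_le_of_injective _ hinj_m
    rwa [Fintype.card_fin, hcard] at this
  have hsurj : ∀ d : R.toMultigraph.Dart, ∃ i : Fin N, p^[(i : ℕ)] d0 = d := by
    intro d
    obtain ⟨i, -, hi⟩ := (hall d).exists_pow_eq'
    have hit : p^[i] d0 = d := by
      rw [hpdef, RibbonGraph.bernardiStep_eq, Equiv.Perm.iterate_eq_pow, hi]
    refine ⟨⟨i % m, lt_of_lt_of_le (Nat.mod_lt _ hm) hmN⟩, ?_⟩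
    rw [Fin.val_mk, Function.iterate_mod_minimalPeriod_eq, hit]
  have hbij : Function.Bijective (fun i : Fin N => p^[(i : ℕ)] d0) := by
    rw [Fintype.bijective_iff_surjective_and_card]
    exact ⟨hsurj, by rw [Fintype.card_fin, hcard]⟩
  have part1 : ∀ d : R.toMultigraph.Dart, ∃! i : Fin N, R.bernardiTour T d0 i = d := by
    intro d
    obtain ⟨i, hi⟩ := hsurj d
    exact ⟨i, hi, fun j hj => hbij.1 (hj.trans hi.symm)⟩
  refine ⟨part1, ?_⟩
  -- Part 2: the Bernardi divisor is a T-break divisor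
  have hex : ∀ e : R.toMultigraph.E, ∃ i : ℕ, (R.bernardiTour T d0 i).1 = e := by
    intro e
    obtain ⟨i, hi, -⟩ := part1 (e, true)
    exact ⟨i, by rw [hi]⟩
  refine ⟨fun e => R.toMultigraph.dtail (R.bernardiTour T d0 (Nat.find (hex e))), ?_, ?_⟩
  · intro e _
    have hspec := Nat.find_spec (hex e)
    rcases Multigraph.dtail_or (R.bernardiTour T d0 (Nat.find (hex e))) with h | h <;>
      rw [hspec] at h
    · exact Or.inl h
    · exact Or.inr h
  · intro v
    show ((Finset.univ.filter _).card : ℤ) = _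
    congr 1
    congr 1
    apply Finset.filter_congr
    intro e _
    refine and_congr_right fun heT => ?_
    constructor
    · rintro ⟨i, h1, h2, h3⟩
      have hfind : Nat.find (hex e) = i := by
        refine le_antisymm (Nat.find_le h1) ?_
        by_contra hlt
        exact h3 _ (not_le.mp hlt) (Nat.find_spec (hex e))
      show R.toMultigraph.dtail (R.bernardiTour T d0 (Nat.find (hex e))) = v
      rw [hfind]
      exact h2
    · intro hch
      exact ⟨Nat.find (hex e), Nat.find_spec (hex e), hch,
        fun j hj => Nat.find_min (hex e) hj⟩

end RibbonGraph
end
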